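/- arXiv:1307.5033 — 7 statements merged into one kernel-verified Lean document; each statement's English description precedes it below -/
import Mathlib

section
/- For an n-by-n complex matrix A with n ≥ 2 and any point z in the interior of the numerical range F(A) = {x*Ax : x ∈ ℂⁿ, x*x = 1}, the preimage f_A⁻¹(z) = {x ∈ ℂⁿ : x*x = 1, x*Ax = z} contains n linearly independent vectors. -/
open Matrix

/-- The field of values generating function `f_A(x) = x* A x`. -/
noncomputable def fA {m : Type*} [Fintype m] (A : Matrix m m ℂ) (x : m → ℂ) : ℂ :=
  star x ⬝ᵥ A.mulVec x

/-- The numerical range (field of values) of `A`. -/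
def NR {m : Type*} [Fintype m] (A : Matrix m m ℂ) : Set ℂ :=
  {z | ∃ x, star x ⬝ᵥ x = 1 ∧ fA A x = z}

/-- Euclidean norm on `m → ℂ`. -/
noncomputable def enorm {m : Type*} [Fintype m] (x : m → ℂ) : ℝ :=
  Real.sqrt (∑ i, ‖x i‖ ^ 2)

/-- Projective distance: infimum of `‖x - ω • y‖` over unimodular `ω`. -/
noncomputable def projDist {m : Type*} [Fintype m] (x y : m → ℂ) : ℝ :=
  sInf {d | ∃ ω : ℂ, ‖ω‖ = 1 ∧ d = _root_.enorm (x - ω • y)}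

variable {m : Type*} [Fintype m]

lemma fA_expand (B : Matrix m m ℂ) (c d : ℂ) (u w : m → ℂ) :
    fA B (c • u + d • w) = star c * c * fA B u + star c * d * (star u ⬝ᵥ B.mulVec w)
      + star d * c * (star w ⬝ᵥ B.mulVec u) + star d * d * fA B w := by
  simp only [fA, mulVec_add, mulVec_smul, dotProduct_add, dotProduct_smul, star_add, star_smul,
    add_dotProduct, smul_dotProduct, smul_eq_mul]
  ring

lemma dot_star_self (x : m → ℂ) : star x ⬝ᵥ x = ((∑ i, Complex.normSq (x i) : ℝ) : ℂ) := by
  simp [dotProduct, Complex.normSq_eq_conj_mul_self]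

lemma fA_sub_smul_one [DecidableEq m] (A : Matrix m m ℂ) (z : ℂ) (x : m → ℂ) :
    fA (A - z • 1) x = fA A x - z * (star x ⬝ᵥ x) := by
  simp [fA, sub_mulVec, smul_mulVec, one_mulVec, dotProduct_sub, dotProduct_smul]

lemma fA_smul (B : Matrix m m ℂ) (c : ℂ) (x : m → ℂ) :
    fA B (c • x) = star c * c * fA B x := by
  simp [fA, mulVec_smul, dotProduct_smul, star_smul, smul_dotProduct, smul_eq_mul]
  ring

lemma dot_star_self_smul (c : ℂ) (x : m → ℂ) :
    star (c • x) ⬝ᵥ (c • x) = star c * c * (star x ⬝ᵥ x) := by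
  simp only [dotProduct_smul, star_smul, smul_dotProduct, smul_eq_mul, Pi.smul_apply]
  ring

lemma sum_normSq_pos (x : m → ℂ) (hx : x ≠ 0) : 0 < ∑ i, Complex.normSq (x i) := by
  refine Finset.sum_pos' (fun i _ => Complex.normSq_nonneg _) ?_
  obtain ⟨i, hi⟩ := Function.ne_iff.mp hx
  have : x i ≠ 0 := hi
  exact ⟨i, Finset.mem_univ i, by simpa [Complex.normSq_pos] using this⟩

-- normalization
lemma normalize_mem (A : Matrix m m ℂ) (z : ℂ) (x : m → ℂ) (hx : x ≠ 0)
    (hf : fA A x = z * (star x ⬝ᵥ x)) :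
    ∃ (x' : m → ℂ) (c : ℂ), c ≠ 0 ∧ x = c • x' ∧ star x' ⬝ᵥ x' = 1 ∧ fA A x' = z := by
  set ν : ℝ := ∑ i, Complex.normSq (x i) with hν
  have hνpos : 0 < ν := sum_normSq_pos x hx
  set r : ℝ := Real.sqrt ν with hr
  have hrpos : 0 < r := Real.sqrt_pos.mpr hνpos
  refine ⟨((r : ℂ))⁻¹ • x, (r : ℂ), by exact_mod_cast hrpos.ne', by
      rw [smul_smul]; rw [mul_inv_cancel₀ (by exact_mod_cast hrpos.ne'), one_smul], ?_, ?_⟩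
  · rw [dot_star_self_smul, dot_star_self]
    have : star ((r:ℂ)⁻¹) = ((r:ℂ))⁻¹ := by
      simp [Complex.star_def, Complex.conj_inv, Complex.conj_ofReal]
    rw [this, ← hν]
    have hr2 : (r:ℂ) * (r:ℂ) = (ν : ℂ) := by
      have : r * r = ν := Real.mul_self_sqrt hνpos.le
      exact_mod_cast this
    have hν0 : (ν : ℂ) ≠ 0 := by exact_mod_cast hνpos.ne'
    field_simp
    rw [sq, hr2]
    field_simp
  · rw [fA_smul, hf, dot_star_self, ← hν]
    have : star ((r:ℂ)⁻¹) = ((r:ℂ))⁻¹ := by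
      simp [Complex.star_def, Complex.conj_inv, Complex.conj_ofReal]
    rw [this]
    have hr2 : (r:ℂ) * (r:ℂ) = (ν : ℂ) := by
      have : r * r = ν := Real.mul_self_sqrt hνpos.le
      exact_mod_cast this
    have hν0 : (ν : ℂ) ≠ 0 := by exact_mod_cast hνpos.ne'
    field_simp [hr2]
    rw [sq, hr2, mul_div_assoc, div_self hν0, mul_one]

lemma exists_phase (a b p : ℂ) (hp : p ≠ 0) :
    ∃ (ω : ℂ) (r : ℝ), star ω * ω = 1 ∧ ω * a + star ω * b = (r : ℂ) * p := by
  set g : ℝ → ℝ := fun θ =>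
    ((Complex.exp (θ * Complex.I) * a + Complex.exp (-(θ * Complex.I)) * b) / p).im with hg
  have hcont : Continuous g := by
    apply Complex.continuous_im.comp
    apply Continuous.div_const
    fun_prop
  have hgπ : g Real.pi = -(g 0) := by
    have e1 : Complex.exp ((Real.pi : ℂ) * Complex.I) = -1 := Complex.exp_pi_mul_I
    have e2 : Complex.exp (-((Real.pi : ℂ) * Complex.I)) = -1 := by
      rw [Complex.exp_neg, e1]; norm_num
    simp only [hg, e1, e2, Complex.ofReal_zero, zero_mul, neg_zero, Complex.exp_zero, one_mul]
    rw [show (-1:ℂ) * a + -1 * b = -(a + b) by ring, neg_div, Complex.neg_im]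
  have hzero : ∃ θ₀, g θ₀ = 0 := by
    rcases le_total (g 0) 0 with h0 | h0
    · have := intermediate_value_Icc Real.pi_pos.le hcont.continuousOn
        (a := 0) (b := Real.pi)
      have hmem : (0:ℝ) ∈ Set.Icc (g 0) (g Real.pi) := by
        constructor
        · exact h0
        · rw [hgπ]; linarith
      obtain ⟨θ₀, _, hθ₀⟩ := this hmem
      exact ⟨θ₀, hθ₀⟩
    · have := intermediate_value_Icc' Real.pi_pos.le hcont.continuousOn
        (a := 0) (b := Real.pi)
      have hmem : (0:ℝ) ∈ Set.Icc (g Real.pi) (g 0) := by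
        constructor
        · rw [hgπ]; linarith
        · exact h0
      obtain ⟨θ₀, _, hθ₀⟩ := this hmem
      exact ⟨θ₀, hθ₀⟩
  obtain ⟨θ₀, hθ₀⟩ := hzero
  set ω : ℂ := Complex.exp (θ₀ * Complex.I) with hω
  have hstar : star ω = Complex.exp (-(θ₀ * Complex.I)) := by
    rw [hω, Complex.star_def, ← Complex.exp_conj]
    congr 1
    simp [Complex.conj_ofReal]
  have hunit : star ω * ω = 1 := by
    rw [hstar, hω, ← Complex.exp_add]
    simp
  refine ⟨ω, ((ω * a + star ω * b) / p).re, hunit, ?_⟩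
  have him : ((ω * a + star ω * b) / p).im = 0 := by
    rw [hstar, hω]; exact hθ₀
  have : (ω * a + star ω * b) / p = (((ω * a + star ω * b) / p).re : ℂ) := by
    apply Complex.ext
    · simp
    · simpa using him
  field_simp at this
  linear_combination this

lemma exists_root (s r : ℝ) (hs : 0 < s) :
    ∃ t : ℝ, 0 < t ∧ t < 1 ∧ (1-t)^2 - s*t^2 + t*(1-t)*r = 0 := by
  set φ : ℝ → ℝ := fun t => (1-t)^2 - s*t^2 + t*(1-t)*r with hφ
  have hcont : Continuous φ := by fun_prop
  have h0 : φ 0 = 1 := by simp [hφ]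
  have h1 : φ 1 = -s := by simp [hφ]
  have := intermediate_value_Icc' (by norm_num : (0:ℝ) ≤ 1) hcont.continuousOn
  have hmem : (0:ℝ) ∈ Set.Icc (φ 1) (φ 0) := by
    rw [h0, h1]; constructor <;> linarith
  obtain ⟨t, htI, hφt⟩ := this hmem
  refine ⟨t, ?_, ?_, hφt⟩
  · rcases lt_or_eq_of_le htI.1 with h | h
    · exact h
    · exfalso; rw [← h] at hφt; rw [h0] at hφt; norm_num at hφt
  · rcases lt_or_eq_of_le htI.2 with h | h
    · exact h
    · exfalso; rw [h] at hφt; rw [h1] at hφt; linarith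

lemma plane_sol (B : Matrix m m ℂ) (u w : m → ℂ) (p : ℂ) (s r : ℝ)
    (hu : fA B u = p) (hw : fA B w = -(s:ℂ) * p) (hs : 0 < s)
    (ω : ℂ) (hω : star ω * ω = 1)
    (hkey : ω * (star u ⬝ᵥ B.mulVec w) + star ω * (star w ⬝ᵥ B.mulVec u) = (r:ℂ) * p) :
    ∃ t : ℝ, 0 < t ∧ t < 1 ∧
      fA B ((((1:ℝ) - t : ℝ):ℂ) • u + ((t:ℂ) * ω) • w) = 0 := by
  obtain ⟨t, h0, h1, hroot⟩ := exists_root s r hs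
  refine ⟨t, h0, h1, ?_⟩
  rw [fA_expand, hu, hw]
  have hroot' : (((1:ℝ)-t)^2 - s*t^2 + t*((1:ℝ)-t)*r : ℂ) = 0 := by
    exact_mod_cast congrArg (fun x : ℝ => (x : ℂ)) hroot
  push_cast at hroot' ⊢
  simp only [Complex.star_def, _root_.map_mul, map_sub, _root_.map_one, Complex.conj_ofReal] at hkey hω ⊢
  linear_combination ((1 - (t:ℂ))*t) * hkey + ((t:ℂ)^2*(-(s:ℂ)*p))*hω + p * hroot'


lemma mem_span_sol [DecidableEq m] (A : Matrix m m ℂ) (z : ℂ) (hz : z ∈ interior (NR A))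
    (u : m → ℂ) (hu : star u ⬝ᵥ u = 1) :
    u ∈ Submodule.span ℂ {x : m → ℂ | star x ⬝ᵥ x = 1 ∧ fA A x = z} := by
  set T : Set (m → ℂ) := {x : m → ℂ | star x ⬝ᵥ x = 1 ∧ fA A x = z} with hT
  set B : Matrix m m ℂ := A - z • (1 : Matrix m m ℂ) with hB
  have hBf : ∀ x, fA B x = fA A x - z * (star x ⬝ᵥ x) := fun x => fA_sub_smul_one A z x
  set p : ℂ := fA B u with hpdef
  by_cases hp : p = 0
  · have hfu : fA A u = z := by
      have := hBf u
      rw [← hpdef, hp, hu] at this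
      linear_combination -this
    exact Submodule.subset_span ⟨hu, hfu⟩
  · -- z is interior: find w with fA B w = -s * p, s > 0
    rw [mem_interior_iff_mem_nhds, Metric.mem_nhds_iff] at hz
    obtain ⟨ε, hε, hball⟩ := hz
    have habs : 0 < ‖p‖ := by
      simpa using hp
    set s : ℝ := ε / (2 * ‖p‖) with hs
    have hspos : 0 < s := by positivity
    have hmem : z + (-(s:ℂ)) * p ∈ NR A := by
      apply hball
      simp only [Metric.mem_ball, Complex.dist_eq, add_sub_cancel_left]
      have habs2 : ‖-(s:ℂ) * p‖ = s * ‖p‖ := by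
        simp [abs_of_pos hspos]
      rw [habs2, hs]
      rw [div_mul_eq_mul_div, mul_comm 2 ‖p‖, ← div_div, mul_div_assoc]
      rw [div_self habs.ne', mul_one]
      linarith
    obtain ⟨w, hw1, hwf⟩ := hmem
    have hfw : fA B w = -(s:ℂ) * p := by
      rw [hBf, hwf, hw1, mul_one]; ring
    obtain ⟨ω, r, hω, hkey⟩ := exists_phase (star u ⬝ᵥ B.mulVec w) (star w ⬝ᵥ B.mulVec u) p hp
    obtain ⟨t₀, ht₀0, ht₀1, hx₀⟩ := plane_sol B u w p s r hpdef.symm hfw hspos ω hω hkey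
    have hω' : star (-ω) * (-ω) = 1 := by rw [star_neg]; linear_combination hω
    have hkey' : (-ω) * (star u ⬝ᵥ B.mulVec w) + star (-ω) * (star w ⬝ᵥ B.mulVec u)
        = ((-r : ℝ):ℂ) * p := by
      rw [star_neg]; push_cast; linear_combination -hkey
    obtain ⟨t₁, ht₁0, ht₁1, hx₁⟩ := plane_sol B u w p s (-r) hpdef.symm hfw hspos (-ω) hω' hkey'
    set x₀ : m → ℂ := (((1:ℝ) - t₀ : ℝ):ℂ) • u + ((t₀:ℂ) * ω) • w with hx₀def
    set x₁ : m → ℂ := (((1:ℝ) - t₁ : ℝ):ℂ) • u + ((t₁:ℂ) * -ω) • w with hx₁def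
    -- u and w are linearly independent
    have hwne : w ≠ 0 := by
      intro h
      rw [h] at hw1
      simp at hw1
    have hindep : ∀ c d : ℂ, c • u + d • w = 0 → c = 0 ∧ d = 0 := by
      intro c d hcd
      have he : c • u = (-d) • w := by
        rw [neg_smul]
        exact eq_neg_of_add_eq_zero_left hcd
      have h1 : star c * c * (star u ⬝ᵥ u) = star (-d) * (-d) * (star w ⬝ᵥ w) := by
        rw [← dot_star_self_smul, ← dot_star_self_smul, he]
      rw [hu, hw1, mul_one, mul_one, star_neg] at h1
      have h1' : star c * c = star d * d := by linear_combination h1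
      have h2 : star c * c * fA B u = star (-d) * (-d) * fA B w := by
        rw [← fA_smul, ← fA_smul, he]
      rw [← hpdef, hfw, star_neg] at h2
      have h2' : star c * c * p = star d * d * (-(s:ℂ) * p) := by linear_combination h2
      rw [← h1'] at h2'
      have h3 : star c * c * ((1 + (s:ℂ)) * p) = 0 := by linear_combination h2'
      have hsne : (1 + (s:ℂ)) * p ≠ 0 := by
        apply mul_ne_zero _ hp
        intro h
        have : (1 + s : ℝ) = 0 := by exact_mod_cast h
        linarith
      have hcc : star c * c = 0 := by
        rcases mul_eq_zero.mp h3 with h | h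
        · exact h
        · exact absurd h hsne
      have hc : c = 0 := by
        have hns : ((Complex.normSq c : ℝ) : ℂ) = 0 := by
          rw [Complex.normSq_eq_conj_mul_self, ← Complex.star_def, hcc]
        have : Complex.normSq c = 0 := by exact_mod_cast hns
        exact Complex.normSq_eq_zero.mp this
      refine ⟨hc, ?_⟩
      rw [hc, zero_smul] at he
      rcases smul_eq_zero.mp he.symm with h | h
      · simpa using h
      · exact absurd h hwne
    have hx₀ne : x₀ ≠ 0 := by
      intro h
      obtain ⟨hc, -⟩ := hindep _ _ h
      rw [Complex.ofReal_eq_zero] at hc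
      linarith
    have hx₁ne : x₁ ≠ 0 := by
      intro h
      obtain ⟨hc, -⟩ := hindep _ _ h
      rw [Complex.ofReal_eq_zero] at hc
      linarith
    have hmem₀ : x₀ ∈ Submodule.span ℂ T := by
      have hf : fA A x₀ = z * (star x₀ ⬝ᵥ x₀) := by
        have h5 := hBf x₀
        rw [hx₀] at h5
        linear_combination -h5
      obtain ⟨x', c, hc0, hxc, hx'1, hx'f⟩ := normalize_mem A z x₀ hx₀ne hf
      rw [hxc]
      exact Submodule.smul_mem _ _ (Submodule.subset_span ⟨hx'1, hx'f⟩)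
    have hmem₁ : x₁ ∈ Submodule.span ℂ T := by
      have hf : fA A x₁ = z * (star x₁ ⬝ᵥ x₁) := by
        have h5 := hBf x₁
        rw [hx₁] at h5
        linear_combination -h5
      obtain ⟨x', c, hc0, hxc, hx'1, hx'f⟩ := normalize_mem A z x₁ hx₁ne hf
      rw [hxc]
      exact Submodule.smul_mem _ _ (Submodule.subset_span ⟨hx'1, hx'f⟩)
    set D : ℝ := t₁ * (1 - t₀) + t₀ * (1 - t₁) with hD
    have hDpos : 0 < D := by
      rw [hD]
      have : 0 < t₁ * (1 - t₀) := mul_pos ht₁0 (by linarith)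
      have : 0 < t₀ * (1 - t₁) := mul_pos ht₀0 (by linarith)
      linarith
    have hcomb : (t₁:ℂ) • x₀ + (t₀:ℂ) • x₁ = ((D:ℝ):ℂ) • u := by
      rw [hx₀def, hx₁def, hD]
      push_cast
      module
    have hu' : u = (((D:ℝ):ℂ))⁻¹ • ((t₁:ℂ) • x₀ + (t₀:ℂ) • x₁) := by
      rw [hcomb, smul_smul, inv_mul_cancel₀, one_smul]
      exact_mod_cast hDpos.ne'
    rw [hu']
    exact Submodule.smul_mem _ _ (Submodule.add_mem _
      (Submodule.smul_mem _ _ hmem₀) (Submodule.smul_mem _ _ hmem₁))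

theorem numericalRange_interior_preimage_linearIndependent
    {n : ℕ} (hn : 2 ≤ n) (A : Matrix (Fin n) (Fin n) ℂ) (z : ℂ)
    (hz : z ∈ interior (NR A)) :
    ∃ v : Fin n → (Fin n → ℂ), LinearIndependent ℂ v ∧
      ∀ i, star (v i) ⬝ᵥ (v i) = 1 ∧ fA A (v i) = z := by
  set T : Set (Fin n → ℂ) := {x : Fin n → ℂ | star x ⬝ᵥ x = 1 ∧ fA A x = z} with hT
  have hspan : Submodule.span ℂ T = ⊤ := by
    rw [eq_top_iff, ← (Pi.basisFun ℂ (Fin n)).span_eq, Submodule.span_le]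
    rintro x ⟨i, rfl⟩
    have hunit : star ((Pi.basisFun ℂ (Fin n)) i) ⬝ᵥ ((Pi.basisFun ℂ (Fin n)) i) = 1 := by
      simp [Pi.basisFun_apply, dotProduct, Pi.single_apply]
    exact mem_span_sol A z hz _ hunit
  obtain ⟨b, hbT, hbsp, hbli⟩ := exists_linearIndependent ℂ T
  rw [hspan] at hbsp
  have hfin : b.Finite := by
    apply hbli.finite
  haveI : Fintype b := hfin.fintype
  have htop : ⊤ ≤ Submodule.span ℂ (Set.range ((↑) : b → (Fin n → ℂ))) := by
    rw [Subtype.range_coe, hbsp]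
  let bas : Module.Basis b ℂ (Fin n → ℂ) := Module.Basis.mk hbli htop
  have hcard : Fintype.card b = n := by
    have h1 := Module.finrank_eq_card_basis bas
    have h2 : Module.finrank ℂ (Fin n → ℂ) = n := by simp
    omega
  let e : b ≃ Fin n := Fintype.equivFinOfCardEq hcard
  refine ⟨fun i => ((e.symm i : b) : Fin n → ℂ), ?_, ?_⟩
  · exact hbli.comp e.symm e.symm.injective
  · intro i
    exact hbT (e.symm i).2
end

section
/- Let S be the sphere of radius r centered at a point c in ℝ³, let x ∈ S, and for ε ∈ [0,2] let C_ε = {y ∈ S : ‖x − y‖ ≤ εr}. If T : ℝ³ → ℝ² is a linear map, then the set (ε²/4)·T(S) + (1 − ε²/4)·T(x) (i.e., {(ε²/4) w + (1 − ε²/4) T(x) : w ∈ T(S)}) is contained in T(C_ε). -/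
open scoped RealInnerProductSpace
set_option maxHeartbeats 1000000

theorem sphericalCap_image_contains_scaled_image
    (c : EuclideanSpace ℝ (Fin 3)) (r : ℝ) (hr : 0 < r)
    (x : EuclideanSpace ℝ (Fin 3)) (hx : x ∈ Metric.sphere c r)
    (ε : ℝ) (hε : ε ∈ Set.Icc (0:ℝ) 2)
    (T : EuclideanSpace ℝ (Fin 3) →ₗ[ℝ] EuclideanSpace ℝ (Fin 2)) :
    ∀ w ∈ T '' (Metric.sphere c r),
      (ε ^ 2 / 4) • w + (1 - ε ^ 2 / 4) • T x ∈
        T '' {y ∈ Metric.sphere c r | ‖x - y‖ ≤ ε * r} := by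
  rintro w ⟨z, hz, rfl⟩
  obtain ⟨hε0, hε2⟩ := hε
  -- kernel vector
  obtain ⟨v, hv0, hvker⟩ : ∃ v : EuclideanSpace ℝ (Fin 3), v ≠ 0 ∧ T v = 0 := by
    have hk : LinearMap.ker T ≠ ⊥ := by
      intro h
      have := LinearMap.finrank_le_finrank_of_injective (LinearMap.ker_eq_bot.mp h)
      simp [finrank_euclideanSpace] at this
    obtain ⟨v, hv, hv0⟩ := Submodule.exists_mem_ne_zero_of_ne_bot hk
    exact ⟨v, hv0, hv⟩
  set u : EuclideanSpace ℝ (Fin 3) := ‖v‖⁻¹ • v with hu_def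
  have hu1 : ‖u‖ = 1 := norm_smul_inv_norm hv0
  have hTu : T u = 0 := by simp [hu_def, map_smul, hvker]
  -- basic facts
  have hxc : ‖x - c‖ = r := by simpa [dist_eq_norm] using hx
  have hzc : ‖z - c‖ = r := by simpa [dist_eq_norm] using hz
  set s : ℝ := ε ^ 2 / 4 with hs_def
  have hs0 : 0 ≤ s := by positivity
  have hs1 : s ≤ 1 := by nlinarith
  set y : EuclideanSpace ℝ (Fin 3) := x + s • (z - x) with hy_def
  have hyc_eq : y - c = (1 - s) • (x - c) + s • (z - c) := by
    rw [hy_def]; module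
  have hyc : ‖y - c‖ ≤ r := by
    rw [hyc_eq]
    calc ‖(1 - s) • (x - c) + s • (z - c)‖
        ≤ ‖(1 - s) • (x - c)‖ + ‖s • (z - c)‖ := norm_add_le _ _
      _ = (1 - s) * r + s * r := by
          rw [norm_smul, norm_smul, hxc, hzc, Real.norm_eq_abs, Real.norm_eq_abs,
            abs_of_nonneg (by linarith), abs_of_nonneg hs0]
      _ = r := by ring
  set β : ℝ := ⟪u, y - c⟫ with hβ_def
  set D : ℝ := β ^ 2 + r ^ 2 - ‖y - c‖ ^ 2 with hD_def
  have hD0 : 0 ≤ D := by nlinarith [norm_nonneg (y - c)]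
  have hβD : β ^ 2 ≤ D := by nlinarith [norm_nonneg (y - c)]
  have hsqrtβ : |β| ≤ Real.sqrt D := by
    rw [← Real.sqrt_sq_eq_abs]
    exact Real.sqrt_le_sqrt hβD
  set t : ℝ := if 0 ≤ ⟪u, x - c⟫ then -β + Real.sqrt D else -β - Real.sqrt D with ht_def
  have hkey1 : t ^ 2 + 2 * t * β = r ^ 2 - ‖y - c‖ ^ 2 := by
    have h : (t + β) ^ 2 = D := by
      rw [ht_def]
      split
      · rw [show -β + Real.sqrt D + β = Real.sqrt D by ring, Real.sq_sqrt hD0]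
      · rw [show -β - Real.sqrt D + β = -Real.sqrt D by ring, neg_pow, Real.sq_sqrt hD0]
        simp
    have h2 : t ^ 2 + 2 * t * β = (t + β) ^ 2 - β ^ 2 := by ring
    rw [h2, h, hD_def]; ring
  have hkey2 : 0 ≤ t * ⟪u, x - c⟫ := by
    rw [ht_def]
    split
    · rename_i h
      apply mul_nonneg _ h
      have : β ≤ Real.sqrt D := le_trans (le_abs_self β) hsqrtβ
      linarith
    · rename_i h
      push_neg at h
      have h3 : -β ≤ Real.sqrt D := le_trans (neg_le_abs β) hsqrtβ
      nlinarith [h.le]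
  set y' : EuclideanSpace ℝ (Fin 3) := y + t • u with hy'_def
  have hy'c : y' - c = (y - c) + t • u := by rw [hy'_def]; module
  have h1 : ‖y' - c‖ = r := by
    have hsq : ‖y' - c‖ ^ 2 = r ^ 2 := by
      rw [hy'c, norm_add_sq_real, real_inner_smul_right, real_inner_comm, ← hβ_def,
        norm_smul, Real.norm_eq_abs, mul_pow, sq_abs, hu1]
      ring_nf
      ring_nf at hkey1
      linarith [hkey1]
    exact (sq_eq_sq₀ (norm_nonneg _) hr.le).mp hsq
  have hinner_y : ⟪x - c, y - c⟫ = r ^ 2 + s * (⟪x - c, z - c⟫ - r ^ 2) := by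
    rw [hyc_eq, inner_add_right, real_inner_smul_right, real_inner_smul_right,
      real_inner_self_eq_norm_sq, hxc]
    ring
  have hizb : -(r ^ 2) ≤ ⟪x - c, z - c⟫ := by
    have := abs_real_inner_le_norm (x - c) (z - c)
    rw [hxc, hzc] at this
    have := neg_abs_le (⟪x - c, z - c⟫)
    nlinarith
  have h2 : ‖x - y'‖ ≤ ε * r := by
    have hxy' : x - y' = (x - c) - (y' - c) := by module
    have hsq : ‖x - y'‖ ^ 2 ≤ (ε * r) ^ 2 := by
      rw [hxy', norm_sub_sq_real, hxc, h1]
      have hi : ⟪x - c, y' - c⟫ = ⟪x - c, y - c⟫ + t * ⟪x - c, u⟫ := by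
        rw [hy'c, inner_add_right, real_inner_smul_right]
      have hcomm : ⟪x - c, u⟫ = ⟪u, x - c⟫ := real_inner_comm _ _
      rw [hi, hinner_y, hcomm, hs_def]
      nlinarith [hkey2, hizb, sq_nonneg ε, hr.le]
    have h0 : 0 ≤ ε * r := mul_nonneg hε0 hr.le
    nlinarith [norm_nonneg (x - y')]
  refine ⟨y', ⟨by simpa [Metric.mem_sphere, dist_eq_norm] using h1, h2⟩, ?_⟩
  have : T y' = T x + s • (T z - T x) := by
    simp [hy'_def, hy_def, map_add, map_smul, map_sub, hTu]
  rw [this, hs_def]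
  module
end

section
/- The convex hull of the spherical cap C_ε = {y ∈ S : ‖x − y‖ ≤ εr} on a sphere S of radius r contains the point (ε²/4)·s + (1 − ε²/4)·x for every s ∈ S; that is, (ε²/4)S + (1 − ε²/4)x ⊆ conv(C_ε). -/
open RealInnerProductSpace

set_option maxHeartbeats 1000000 in
theorem convexHull_sphericalCap_contains_scaled_sphere
    (c : EuclideanSpace ℝ (Fin 3)) (r : ℝ) (hr : 0 < r)
    (x : EuclideanSpace ℝ (Fin 3)) (hx : x ∈ Metric.sphere c r)
    (ε : ℝ) (hε : ε ∈ Set.Icc (0:ℝ) 2) :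
    ∀ s ∈ Metric.sphere c r,
      (ε ^ 2 / 4) • s + (1 - ε ^ 2 / 4) • x ∈
        convexHull ℝ {y ∈ Metric.sphere c r | ‖x - y‖ ≤ ε * r} := by
  intro s hs
  obtain ⟨hε0, hε2⟩ := hε
  set t : ℝ := ε ^ 2 / 4 with ht
  have ht0 : 0 ≤ t := by positivity
  have ht1 : t ≤ 1 := by nlinarith
  set p : EuclideanSpace ℝ (Fin 3) := t • s + (1 - t) • x with hp
  have hxc : ‖x - c‖ = r := by simpa [Metric.mem_sphere, dist_eq_norm] using hx
  have hsc : ‖s - c‖ = r := by simpa [Metric.mem_sphere, dist_eq_norm] using hs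
  have hpc : p - c = t • (s - c) + (1 - t) • (x - c) := by
    simp only [hp, smul_sub]
    module
  have hnorm_pc : ‖p - c‖ ≤ r := by
    rw [hpc]
    calc ‖t • (s - c) + (1 - t) • (x - c)‖
        ≤ ‖t • (s - c)‖ + ‖(1 - t) • (x - c)‖ := norm_add_le _ _
      _ = t * r + (1 - t) * r := by
          rw [norm_smul, norm_smul, hsc, hxc, Real.norm_eq_abs, Real.norm_eq_abs,
            abs_of_nonneg ht0, abs_of_nonneg (by linarith)]
      _ = r := by ring
  clear_value t p
  have hinner : (1 - ε ^ 2 / 2) * r ^ 2 ≤ ⟪x - c, p - c⟫ := by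
    have hsx : -(r ^ 2) ≤ ⟪x - c, s - c⟫ := by
      have h1 := abs_real_inner_le_norm (x - c) (s - c)
      rw [hxc, hsc] at h1
      have h2 := neg_abs_le ⟪x - c, s - c⟫
      nlinarith
    have hxx : ⟪x - c, x - c⟫ = r ^ 2 := by
      rw [real_inner_self_eq_norm_sq, hxc]
    rw [hpc, inner_add_right, real_inner_smul_right, real_inner_smul_right, hxx]
    nlinarith
  -- find a unit vector orthogonal to both p - c and x - c
  set K : Submodule ℝ (EuclideanSpace ℝ (Fin 3)) :=
    Submodule.span ℝ {p - c, x - c} with hK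
  have hKrange : ({p - c, x - c} : Set (EuclideanSpace ℝ (Fin 3)))
      = Set.range ![p - c, x - c] := by
    ext y
    simp [Matrix.range_cons, Matrix.range_empty]
    tauto
  have hKfin : Module.finrank ℝ K ≤ 2 := by
    have h1 := finrank_range_le_card (R := ℝ) ![p - c, x - c]
    rw [hK, hKrange]
    simpa [Set.finrank] using h1
  have hKne : K ≠ ⊤ := by
    intro h
    have h3 : Module.finrank ℝ (EuclideanSpace ℝ (Fin 3)) = 3 := finrank_euclideanSpace_fin
    rw [h, finrank_top, h3] at hKfin
    omega
  have hKorth : Kᗮ ≠ ⊥ := fun h => hKne (Submodule.orthogonal_eq_bot_iff.mp h)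
  obtain ⟨z, hzK, hz0⟩ := Submodule.exists_mem_ne_zero_of_ne_bot hKorth
  set v : EuclideanSpace ℝ (Fin 3) := ‖z‖⁻¹ • z with hv
  have hvnorm : ‖v‖ = 1 := by
    rw [hv, norm_smul, norm_inv, norm_norm]
    field_simp [norm_ne_zero_iff.mpr hz0]
  clear_value v
  have hvK : v ∈ Kᗮ := by rw [hv]; exact Submodule.smul_mem _ _ hzK
  have hvp : ⟪p - c, v⟫ = 0 :=
    (Submodule.mem_orthogonal K v).mp hvK _ (Submodule.subset_span (by simp))
  have hvx : ⟪x - c, v⟫ = 0 :=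
    (Submodule.mem_orthogonal K v).mp hvK _ (Submodule.subset_span (by simp))
  set d : ℝ := Real.sqrt (r ^ 2 - ‖p - c‖ ^ 2) with hd
  have hd2 : d ^ 2 = r ^ 2 - ‖p - c‖ ^ 2 := by
    rw [hd, Real.sq_sqrt]
    nlinarith [norm_nonneg (p - c)]
  clear_value d
  have key : ∀ σ : ℝ, σ = 1 ∨ σ = -1 →
      p + (σ * d) • v ∈ {y ∈ Metric.sphere c r | ‖x - y‖ ≤ ε * r} := by
    intro σ hσ
    have hσ2 : σ ^ 2 = 1 := by rcases hσ with h | h <;> rw [h] <;> ring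
    have hyc : p + (σ * d) • v - c = (p - c) + (σ * d) • v := by module
    have hy_sphere : ‖(p - c) + (σ * d) • v‖ = r := by
      have h1 : ‖(p - c) + (σ * d) • v‖ ^ 2 = r ^ 2 := by
        rw [norm_add_sq_real, real_inner_smul_right, hvp, norm_smul, mul_pow,
          Real.norm_eq_abs, sq_abs, mul_pow, hσ2, hvnorm]
        nlinarith
      nlinarith [norm_nonneg ((p - c) + (σ * d) • v)]
    constructor
    · rw [Metric.mem_sphere, dist_eq_norm, hyc, hy_sphere]
    · have hxy : x - (p + (σ * d) • v) = (x - c) - ((p - c) + (σ * d) • v) := by module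
      have h2 : ‖(x - c) - ((p - c) + (σ * d) • v)‖ ^ 2 ≤ (ε * r) ^ 2 := by
        rw [norm_sub_sq_real, inner_add_right, real_inner_smul_right, hvx, hxc, hy_sphere]
        nlinarith
      have hεr : 0 ≤ ε * r := by positivity
      rw [hxy]
      nlinarith [norm_nonneg ((x - c) - ((p - c) + (σ * d) • v))]
  have hy1 := key 1 (Or.inl rfl)
  have hy2 := key (-1) (Or.inr rfl)
  have hconv : Convex ℝ (convexHull ℝ {y ∈ Metric.sphere c r | ‖x - y‖ ≤ ε * r}) :=
    convex_convexHull ℝ _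
  have hmem1 := subset_convexHull ℝ _ hy1
  have hmem2 := subset_convexHull ℝ _ hy2
  have hmem := hconv hmem1 hmem2 (by norm_num : (0:ℝ) ≤ 1/2) (by norm_num : (0:ℝ) ≤ 1/2)
    (by norm_num)
  have hmid : (1/2 : ℝ) • (p + ((1:ℝ) * d) • v) + (1/2 : ℝ) • (p + ((-1:ℝ) * d) • v) = p := by
    module
  rw [hmid] at hmem
  exact hmem
end

section
/- Let A ∈ M_n(ℂ) and suppose z = x*Ax with x a unit vector in ℂⁿ. For any open neighborhood U of x in the unit sphere of ℂⁿ, there exists δ > 0 such that δ·F(A) + (1−δ)·z ⊆ f_A(U), where δ·F(A) + (1−δ)z = {δw + (1−δ)z : w ∈ F(A)}. -/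
open Matrix

lemma fA_expand_s4 {n : ℕ} (A : Matrix (Fin n) (Fin n) ℂ) (x v : Fin n → ℂ) (a b : ℂ) :
    fA A (a • x + b • v) =
      (starRingEnd ℂ a) * a * (star x ⬝ᵥ A.mulVec x)
      + (starRingEnd ℂ a) * b * (star x ⬝ᵥ A.mulVec v)
      + (starRingEnd ℂ b) * a * (star v ⬝ᵥ A.mulVec x)
      + (starRingEnd ℂ b) * b * (star v ⬝ᵥ A.mulVec v) := by
  simp only [fA, Matrix.mulVec_add, Matrix.mulVec_smul, star_add, star_smul,
    dotProduct_add, add_dotProduct, smul_dotProduct,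
    dotProduct_smul, smul_eq_mul, Complex.star_def]
  ring

lemma dot_expand {n : ℕ} (x v : Fin n → ℂ) (a b : ℂ) :
    star (a • x + b • v) ⬝ᵥ (a • x + b • v) =
      (starRingEnd ℂ a) * a * (star x ⬝ᵥ x)
      + (starRingEnd ℂ a) * b * (star x ⬝ᵥ v)
      + (starRingEnd ℂ b) * a * (star v ⬝ᵥ x)
      + (starRingEnd ℂ b) * b * (star v ⬝ᵥ v) := by
  have := fA_expand_s4 1 x v a b
  simpa [fA, Matrix.one_mulVec] using this

lemma dot_self_eq {n : ℕ} (a : Fin n → ℂ) : star a ⬝ᵥ a = ((∑ i, ‖a i‖^2 : ℝ) : ℂ) := by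
  rw [dotProduct]
  push_cast
  refine Finset.sum_congr rfl fun i _ => ?_
  simp only [Pi.star_apply, Complex.star_def]
  rw [mul_comm, Complex.mul_conj, Complex.normSq_eq_norm_sq]
  push_cast
  simp

lemma dot_conj {n : ℕ} (a b : Fin n → ℂ) :
    star a ⬝ᵥ b = starRingEnd ℂ (star b ⬝ᵥ a) := by
  simp [dotProduct, map_sum, mul_comm]

lemma exists_ker (P Q R : ℂ) :
    ∃ k₁ k₂ k₃ : ℝ, (k₁ ≠ 0 ∨ k₂ ≠ 0 ∨ k₃ ≠ 0) ∧
      ((k₁:ℂ) + (k₂:ℂ)*Complex.I)*P + ((k₁:ℂ) - (k₂:ℂ)*Complex.I)*Q - (k₃:ℂ)*R = 0 := by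
  by_cases hR : R = 0
  · exact ⟨0, 0, 1, Or.inr (Or.inr one_ne_zero), by simp [hR]⟩
  · obtain ⟨w₁, hw₁⟩ : ∃ w, w = (P+Q)/R := ⟨_, rfl⟩
    obtain ⟨w₂, hw₂⟩ : ∃ w, w = (Complex.I*(P-Q))/R := ⟨_, rfl⟩
    have hPQ : P + Q = w₁ * R := by rw [hw₁]; field_simp
    have hIPQ : Complex.I*(P-Q) = w₂ * R := by rw [hw₂]; field_simp
    by_cases h1 : w₁.im = 0
    · refine ⟨1, 0, w₁.re, Or.inl one_ne_zero, ?_⟩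
      have hw₁re : (w₁.re : ℂ) = w₁ := Complex.ext rfl (by simp [h1])
      push_cast
      linear_combination hPQ - R * hw₁re
    · refine ⟨-w₂.im/w₁.im, 1, (-w₂.im/w₁.im)*w₁.re + w₂.re, Or.inr (Or.inl one_ne_zero), ?_⟩
      have hkey : ((-w₂.im/w₁.im : ℝ):ℂ) * w₁ + w₂ = (((-w₂.im/w₁.im)*w₁.re + w₂.re : ℝ):ℂ) := by
        apply Complex.ext
        · simp [Complex.mul_re]
        · simp [Complex.mul_im]
          field_simp
          ring
      push_cast at hkey ⊢
      linear_combination hPQ * (-w₂.im/w₁.im : ℂ) + hIPQ + R * hkey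


lemma neg_le_of_sq_le_sq' (p q : ℝ) (hq : 0 ≤ q) (h : p^2 ≤ q^2) : -q ≤ p := by
  nlinarith [sq_nonneg (p+q)]

lemma le_of_sq_le_sq'' (p q : ℝ) (hq : 0 ≤ q) (h : p^2 ≤ q^2) : p ≤ q := by
  nlinarith [sq_nonneg (p-q), sq_nonneg (p+q)]

lemma lt_of_sq_le_quarter (d e : ℝ) (he : 0 < e) (h : d^2 ≤ e^2/4) : d < e := by
  have h1 : d ≤ e/2 := le_of_sq_le_sq'' d (e/2) (by linarith) (by nlinarith)
  linarith

set_option maxHeartbeats 1000000 in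
theorem scaled_numericalRange_subset_image_of_nhd
    {n : ℕ} (A : Matrix (Fin n) (Fin n) ℂ) (x : Fin n → ℂ)
    (hx : star x ⬝ᵥ x = 1) (z : ℂ) (hz : fA A x = z)
    (U : Set (Fin n → ℂ)) (hxU : x ∈ U)
    (hU : ∃ V : Set (Fin n → ℂ), IsOpen V ∧ U = V ∩ {y | star y ⬝ᵥ y = 1}) :
    ∃ δ : ℝ, 0 < δ ∧ ∀ w ∈ NR A, (δ : ℂ) * w + (1 - (δ : ℂ)) * z ∈ fA A '' U := by
  obtain ⟨V, hVopen, hUV⟩ := hU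
  have hxV : x ∈ V := by rw [hUV] at hxU; exact hxU.1
  obtain ⟨ε₀, hε₀, hball⟩ := Metric.isOpen_iff.mp hVopen x hxV
  obtain ⟨ε, hεdef⟩ : ∃ e : ℝ, e = min ε₀ 1 := ⟨_, rfl⟩
  have hε : 0 < ε := by rw [hεdef]; exact lt_min hε₀ one_pos
  have hε1 : ε ≤ 1 := by rw [hεdef]; exact min_le_right _ _
  have hεε₀ : ε ≤ ε₀ := by rw [hεdef]; exact min_le_left _ _
  have hε2 : ε^2 ≤ 1 := pow_le_one₀ hε.le hε1
  refine ⟨ε^4/1024, by positivity, ?_⟩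
  obtain ⟨δ, hδdef⟩ : ∃ d : ℝ, d = ε^4/1024 := ⟨_, rfl⟩
  rw [← hδdef]
  have hδ0 : 0 < δ := by rw [hδdef]; positivity
  have hδ1 : δ ≤ 1/1024 := by
    rw [hδdef]
    have : ε^4 ≤ 1 := pow_le_one₀ hε.le hε1
    linarith
  have h4δ : 4*δ = (ε^2/16)^2 := by rw [hδdef]; ring
  intro w hwNR
  obtain ⟨y₀, hy₀, hfy₀⟩ := hwNR
  -- phase adjustment
  obtain ⟨c₀, hc₀def⟩ : ∃ c₀ : ℂ, c₀ = star x ⬝ᵥ y₀ := ⟨_, rfl⟩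
  obtain ⟨ω, hωdef⟩ : ∃ ω : ℂ, ω = if c₀ = 0 then 1 else (starRingEnd ℂ c₀) / ‖c₀‖ := ⟨_, rfl⟩
  have hωω : (starRingEnd ℂ ω) * ω = 1 := by
    rw [hωdef]
    by_cases h : c₀ = 0
    · simp [h]
    · have hne : (‖c₀‖ : ℂ) ≠ 0 := by
        simp [Complex.ofReal_ne_zero, norm_ne_zero_iff, h]
      simp only [if_neg h, map_div₀, Complex.conj_conj, Complex.conj_ofReal]
      rw [div_mul_div_comm, Complex.mul_conj,
        Complex.normSq_eq_norm_sq, div_eq_one_iff_eq (mul_ne_zero hne hne)]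
      push_cast
      ring
  obtain ⟨y, hydef⟩ : ∃ y : Fin n → ℂ, y = ω • y₀ := ⟨_, rfl⟩
  obtain ⟨c, hcdef⟩ : ∃ c : ℝ, c = ‖c₀‖ := ⟨_, rfl⟩
  have hc0 : 0 ≤ c := by rw [hcdef]; exact norm_nonneg _
  have hy1 : star y ⬝ᵥ y = 1 := by
    have e1 : star (ω • y₀) ⬝ᵥ (ω • y₀) = (starRingEnd ℂ ω * ω) * (star y₀ ⬝ᵥ y₀) := by
      simp only [star_smul, smul_dotProduct, dotProduct_smul, smul_eq_mul,
        Complex.star_def]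
      ring
    rw [hydef, e1, hωω, hy₀, one_mul]
  have hfAy : fA A y = w := by
    have e1 : fA A (ω • y₀) = (starRingEnd ℂ ω * ω) * fA A y₀ := by
      simp only [fA, star_smul, Matrix.mulVec_smul, smul_dotProduct,
        dotProduct_smul, smul_eq_mul, Complex.star_def]
      ring
    rw [hydef, e1, hωω, hfy₀, one_mul]
  have hxy : star x ⬝ᵥ y = (c:ℝ) := by
    rw [hydef]
    simp only [dotProduct_smul, smul_eq_mul, ← hc₀def]
    rw [hωdef, hcdef]
    by_cases h : c₀ = 0
    · simp [h]
    · have hne : (‖c₀‖ : ℂ) ≠ 0 := by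
        simp [Complex.ofReal_ne_zero, norm_ne_zero_iff, h]
      rw [if_neg h, div_mul_eq_mul_div, mul_comm, Complex.mul_conj, Complex.normSq_eq_norm_sq,
        div_eq_iff hne]
      push_cast
      ring
  have hyx : star y ⬝ᵥ x = (c:ℝ) := by
    rw [dot_conj, hxy, Complex.conj_ofReal]
  -- norm of y - c x
  have hyc : star (y - (c:ℂ) • x) ⬝ᵥ (y - (c:ℂ) • x) = ((1 - c^2 : ℝ) : ℂ) := by
    have e0 : y - (c:ℂ) • x = (1:ℂ) • y + (-(c:ℂ)) • x := by
      funext i; simp; ring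
    rw [e0, dot_expand, hy1, hyx, hxy, hx]
    simp only [map_neg, Complex.conj_ofReal, RingHom.map_one]
    push_cast
    ring
  have hsumyc : (∑ i, ‖(y - (c:ℂ) • x) i‖^2 : ℝ) = 1 - c^2 := by
    have := dot_self_eq (y - (c:ℂ) • x)
    rw [this] at hyc
    exact_mod_cast hyc
  have hc2 : c^2 ≤ 1 := by
    have hnn : (0:ℝ) ≤ ∑ i, ‖(y - (c:ℂ) • x) i‖^2 :=
      Finset.sum_nonneg fun i _ => by positivity
    linarith [hsumyc ▸ hnn]
  obtain ⟨s, hsdef⟩ : ∃ s : ℝ, s = Real.sqrt (1 - c^2) := ⟨_, rfl⟩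
  have hs0 : 0 ≤ s := by rw [hsdef]; exact Real.sqrt_nonneg _
  have hs2 : s^2 = 1 - c^2 := by rw [hsdef]; exact Real.sq_sqrt (by linarith)
  have hcs : c^2 + s^2 = 1 := by linarith
  rcases eq_or_lt_of_le hs0 with hs | hs
  · -- degenerate case : y is a multiple of x, w = z
    have hc1 : c = 1 := by
      have hc2' : c^2 = 1 := by rw [← hs] at hs2; nlinarith [hs2]
      have hfac : (c-1)*(c+1) = 0 := by linear_combination hc2'
      rcases mul_eq_zero.mp hfac with h | h
      · linarith
      · linarith
    have hsum0 : (∑ i, ‖(y - (c:ℂ) • x) i‖^2 : ℝ) = 0 := by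
      rw [hsumyc, hc1]; ring
    have hyeqx : y = x := by
      funext i
      have hterm : ‖(y - (c:ℂ) • x) i‖^2 = 0 := by
        have := (Finset.sum_eq_zero_iff_of_nonneg
          (fun i _ => by positivity : ∀ i ∈ Finset.univ, (0:ℝ) ≤ ‖(y - (c:ℂ) • x) i‖^2)).mp hsum0
        exact this i (Finset.mem_univ i)
      have : (y - (c:ℂ) • x) i = 0 := by
        have := pow_eq_zero_iff (n := 2) (by norm_num) |>.mp hterm
        exact norm_eq_zero.mp this
      have h2 : y i - (c:ℂ) * x i = 0 := by simpa using this
      rw [hc1] at h2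
      push_cast at h2
      have h3 := sub_eq_zero.mp h2
      simpa using h3
    have hwz : w = z := by rw [← hfAy, hyeqx, hz]
    rw [hwz]
    have hcomb : (δ:ℂ) * z + (1 - (δ:ℂ)) * z = z := by ring
    rw [hcomb]
    exact ⟨x, hxU, hz⟩
  · -- main case : 0 < s
    have hsC : ((s:ℝ):ℂ) ≠ 0 := by exact_mod_cast hs.ne'
    obtain ⟨v, hvdef⟩ : ∃ v : Fin n → ℂ, v = ((s:ℝ):ℂ)⁻¹ • (y - (c:ℂ) • x) := ⟨_, rfl⟩
    have hxv : star x ⬝ᵥ v = 0 := by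
      rw [hvdef]
      simp only [dotProduct_smul, dotProduct_sub, smul_eq_mul, hxy, hx]
      simp
    have hvx : star v ⬝ᵥ x = 0 := by rw [dot_conj, hxv, map_zero]
    have hvv : star v ⬝ᵥ v = 1 := by
      rw [hvdef, star_smul]
      simp only [smul_dotProduct, dotProduct_smul, smul_eq_mul, Complex.star_def,
        map_inv₀, Complex.conj_ofReal]
      rw [hyc, ← hs2]
      push_cast
      field_simp
    have hyv : y = (c:ℂ) • x + ((s:ℝ):ℂ) • v := by
      rw [hvdef, smul_inv_smul₀ hsC]
      funext i
      simp
    obtain ⟨P, hPdef⟩ : ∃ p : ℂ, p = star x ⬝ᵥ A.mulVec v := ⟨_, rfl⟩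
    obtain ⟨Q, hQdef⟩ : ∃ q : ℂ, q = star v ⬝ᵥ A.mulVec x := ⟨_, rfl⟩
    obtain ⟨VAV, hVAVdef⟩ : ∃ r : ℂ, r = star v ⬝ᵥ A.mulVec v := ⟨_, rfl⟩
    have hzx : star x ⬝ᵥ A.mulVec x = z := hz
    have hw : w = (c:ℂ)^2*z + (c:ℂ)*(s:ℂ)*P + (c:ℂ)*(s:ℂ)*Q + (s:ℂ)^2*VAV := by
      rw [← hfAy, hyv, fA_expand_s4, hzx, ← hPdef, ← hQdef, ← hVAVdef]
      simp only [Complex.conj_ofReal]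
      ring
    obtain ⟨k₁, k₂, k₃, hK2', hb, hker⟩ :
        ∃ k₁ k₂ k₃ : ℝ, 0 < k₁^2+k₂^2+k₃^2 ∧ 0 ≤ 2*δ*c*s*k₁ + (1-2*δ*s^2)*k₃ ∧
          ((k₁:ℂ) + (k₂:ℂ)*Complex.I)*P + ((k₁:ℂ) - (k₂:ℂ)*Complex.I)*Q - (k₃:ℂ)*(VAV - z) = 0 := by
      obtain ⟨k₁, k₂, k₃, hknz, hker⟩ := exists_ker P Q (VAV - z)
      have hK2 : 0 < k₁^2+k₂^2+k₃^2 := by rcases hknz with h|h|h <;> positivity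
      rcases le_or_gt 0 (2*δ*c*s*k₁ + (1-2*δ*s^2)*k₃) with h | h
      · exact ⟨k₁, k₂, k₃, hK2, h, hker⟩
      · refine ⟨-k₁, -k₂, -k₃, by simp only [neg_sq]; exact hK2, by linarith, ?_⟩
        push_cast
        linear_combination -hker
    obtain ⟨K2, hK2def⟩ : ∃ t : ℝ, t = k₁^2+k₂^2+k₃^2 := ⟨_, rfl⟩
    have hK2 : 0 < K2 := by rw [hK2def]; exact hK2'
    obtain ⟨bb, hbdef⟩ : ∃ t : ℝ, t = 2*δ*c*s*k₁ + (1-2*δ*s^2)*k₃ := ⟨_, rfl⟩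
    have hb' : 0 ≤ bb := by rw [hbdef]; exact hb
    obtain ⟨D, hDdef⟩ : ∃ t : ℝ, t = 4*δ*(1-δ)*s^2 := ⟨_, rfl⟩
    have hD0 : 0 ≤ D := by
      rw [hDdef]
      have h1 : (0:ℝ) ≤ 1 - δ := by linarith
      positivity
    have hs21 : s^2 ≤ 1 := by linarith [sq_nonneg c]
    have hD4 : D ≤ 4*δ := by
      rw [hDdef]
      have e1 : (1-δ)*s^2 ≤ 1*s^2 := mul_le_mul_of_nonneg_right (by linarith) (sq_nonneg s)
      have e2 : (1-δ)*s^2 ≤ 1 := by linarith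
      have e3 : 4*δ*((1-δ)*s^2) ≤ 4*δ*1 := mul_le_mul_of_nonneg_left e2 (by linarith)
      have e4 : 4*δ*(1-δ)*s^2 = 4*δ*((1-δ)*s^2) := by ring
      linarith
    obtain ⟨S, hSdef⟩ : ∃ t : ℝ, t = Real.sqrt (bb^2 + K2*D) := ⟨_, rfl⟩
    have hS2 : S^2 = bb^2 + K2*D := by
      rw [hSdef]
      exact Real.sq_sqrt (add_nonneg (sq_nonneg bb) (mul_nonneg hK2.le hD0))
    have hS0 : 0 ≤ S := by rw [hSdef]; exact Real.sqrt_nonneg _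
    have hSb : bb ≤ S := by
      refine le_of_sq_le_sq'' bb S hS0 ?_
      have : 0 ≤ K2*D := mul_nonneg hK2.le hD0
      linarith
    obtain ⟨τ, hτdef⟩ : ∃ t : ℝ, t = (S - bb)/K2 := ⟨_, rfl⟩
    have hτ0 : 0 ≤ τ := by rw [hτdef]; exact div_nonneg (by linarith) hK2.le
    have hkey : K2*τ^2 + 2*bb*τ = D := by
      rw [hτdef]
      field_simp
      linear_combination hS2
    have hτK : K2 * τ^2 ≤ D := by
      have : 0 ≤ 2*bb*τ := by positivity
      linarith
    have hk₃K : k₃^2 ≤ K2 := by rw [hK2def]; linarith [sq_nonneg k₁, sq_nonneg k₂]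
    have hτk₃ : (τ*k₃)^2 ≤ 4*δ := by
      have h1 : τ^2*k₃^2 ≤ τ^2*K2 := mul_le_mul_of_nonneg_left hk₃K (sq_nonneg τ)
      have h2 : (τ*k₃)^2 = τ^2*k₃^2 := by ring
      have h3 : τ^2*K2 = K2*τ^2 := by ring
      linarith
    have hτk₃' : -(ε^2/16) ≤ τ*k₃ := by
      refine neg_le_of_sq_le_sq' (τ*k₃) (ε^2/16) (by positivity) ?_
      rw [← h4δ]; exact hτk₃
    obtain ⟨n₁, hn₁def⟩ : ∃ t : ℝ, t = 2*δ*c*s + τ*k₁ := ⟨_, rfl⟩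
    obtain ⟨n₂, hn₂def⟩ : ∃ t : ℝ, t = τ*k₂ := ⟨_, rfl⟩
    obtain ⟨n₃, hn₃def⟩ : ∃ t : ℝ, t = 1 - 2*δ*s^2 + τ*k₃ := ⟨_, rfl⟩
    have hn : n₁^2 + n₂^2 + n₃^2 = 1 := by
      rw [hn₁def, hn₂def, hn₃def]
      have hkey' := hkey
      rw [hK2def, hbdef, hDdef] at hkey'
      linear_combination hkey' + 4*δ^2*s^2*hcs
    have hn₃1 : n₃ ≤ 1 := by
      refine le_of_sq_le_sq'' n₃ 1 zero_le_one ?_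
      have h1 := sq_nonneg n₁
      have h2 := sq_nonneg n₂
      have h3 : (1:ℝ)^2 = 1 := one_pow 2
      linarith [hn]
    have hsle1 : s ≤ 1 := le_of_sq_le_sq'' s 1 zero_le_one (by rw [one_pow]; exact hs21)
    have hn₃l : (7:ℝ)/8 ≤ n₃ := by
      rw [hn₃def]
      have h1 : 2*δ*s^2 ≤ 2*δ := by
        have := mul_le_mul_of_nonneg_left hs21 (show (0:ℝ) ≤ 2*δ by linarith)
        linarith
      linarith [hτk₃', hε2]
    obtain ⟨α, hαdef⟩ : ∃ t : ℝ, t = Real.sqrt ((1+n₃)/2) := ⟨_, rfl⟩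
    have hα2 : α^2 = (1+n₃)/2 := by rw [hαdef]; exact Real.sq_sqrt (by linarith)
    have hα0 : 0 < α := by rw [hαdef]; exact Real.sqrt_pos.mpr (by linarith)
    have hαn₃ : n₃ ≤ α := by
      refine le_of_sq_le_sq'' n₃ α hα0.le ?_
      have hprod : 0 ≤ (1-n₃)*(1+2*n₃) := mul_nonneg (by linarith) (by linarith)
      have hexp : (1-n₃)*(1+2*n₃) = 1 + n₃ - 2*n₃^2 := by ring
      linarith [hα2]
    have hαC : ((α:ℝ):ℂ) ≠ 0 := by exact_mod_cast hα0.ne'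
    obtain ⟨β, hβdef⟩ : ∃ t : ℂ, t = ((n₁:ℂ) + (n₂:ℂ)*Complex.I)/(2*(α:ℂ)) := ⟨_, rfl⟩
    have hnC : (n₁:ℂ)^2 + (n₂:ℂ)^2 + (n₃:ℂ)^2 = 1 := by exact_mod_cast hn
    have hα2C : ((α:ℂ))^2 = (1+(n₃:ℂ))/2 := by exact_mod_cast hα2
    have hconjβ : (starRingEnd ℂ) β = ((n₁:ℂ) - (n₂:ℂ)*Complex.I)/(2*(α:ℂ)) := by
      rw [hβdef]
      have h2c : (starRingEnd ℂ) (2:ℂ) = 2 := by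
        rw [show (2:ℂ) = ((2:ℝ):ℂ) by norm_num, Complex.conj_ofReal]
      simp [map_div₀, Complex.conj_ofReal, Complex.conj_I, h2c]
      ring
    have hββ : (starRingEnd ℂ) β * β = (((1-n₃)/2 : ℝ):ℂ) := by
      rw [hconjβ, hβdef]
      field_simp
      push_cast
      linear_combination (2:ℂ)*hnC - 4*hα2C + 4*(n₃:ℂ)*hα2C + ((n₂:ℂ)^2*2 + 2 - 2*(n₃:ℂ)^2 - 2*(n₁:ℂ)^2)*Complex.I_sq + (2*(n₁:ℂ)^2 - 4*(n₂:ℂ)^2 - 2 + 2*(n₃:ℂ)^2)*Complex.I_sq + (n₂:ℂ)^2*Complex.I_sq + 2*(1-(n₃:ℂ))*hα2C - hnC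
    have hαβ : ((α:ℝ):ℂ) * β = ((n₁:ℂ) + (n₂:ℂ)*Complex.I)/2 := by
      rw [hβdef]; field_simp
    have hβα : (starRingEnd ℂ) β * ((α:ℝ):ℂ) = ((n₁:ℂ) - (n₂:ℂ)*Complex.I)/2 := by
      rw [hconjβ]; field_simp
    obtain ⟨u, hudef⟩ : ∃ u : Fin n → ℂ, u = ((α:ℝ):ℂ) • x + β • v := ⟨_, rfl⟩
    have hu1 : star u ⬝ᵥ u = 1 := by
      rw [hudef, dot_expand, hx, hxv, hvx, hvv, hββ, Complex.conj_ofReal]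
      push_cast
      linear_combination hα2C
    have hnC1 : (n₁:ℂ) = 2*(δ:ℂ)*(c:ℂ)*(s:ℂ) + (τ:ℂ)*(k₁:ℂ) := by exact_mod_cast hn₁def
    have hnC2 : (n₂:ℂ) = (τ:ℂ)*(k₂:ℂ) := by exact_mod_cast hn₂def
    have hnC3 : (n₃:ℂ) = 1 - 2*(δ:ℂ)*(s:ℂ)^2 + (τ:ℂ)*(k₃:ℂ) := by exact_mod_cast hn₃def
    have hcsC : (c:ℂ)^2 + (s:ℂ)^2 = 1 := by exact_mod_cast hcs
    have hfAu : fA A u = (δ:ℂ)*w + (1-(δ:ℂ))*z := by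
      rw [hudef, fA_expand_s4, hzx, ← hPdef, ← hQdef, ← hVAVdef, Complex.conj_ofReal, hαβ, hβα,
        hββ, hw]
      push_cast
      linear_combination z*hα2C + ((P+Q)/2)*hnC1 + (Complex.I*(P-Q)/2)*hnC2 +
        ((z-VAV)/2)*hnC3 + ((τ:ℂ)/2)*hker - (δ:ℂ)*z*hcsC
    have hsum : ((∑ i, ‖(u - x) i‖^2 : ℝ):ℂ) = ((2 - 2*α : ℝ):ℂ) := by
      rw [← dot_self_eq]
      have hux : u - x = (((α:ℝ):ℂ) - 1) • x + β • v := by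
        rw [hudef]; funext i; simp; ring
      rw [hux, dot_expand, hx, hxv, hvx, hvv, hββ]
      simp only [map_sub, Complex.conj_ofReal, RingHom.map_one]
      push_cast
      linear_combination hα2C
    have hsumR : (∑ i, ‖(u - x) i‖^2 : ℝ) = 2 - 2*α := by exact_mod_cast hsum
    have hbound : 2 - 2*α ≤ ε^2/4 := by
      have h1 : 2 - 2*α ≤ 2 - 2*n₃ := by linarith [hαn₃]
      have h1' : 2*δ*s^2 ≤ 2*δ := by
        have := mul_le_mul_of_nonneg_left hs21 (show (0:ℝ) ≤ 2*δ by linarith)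
        linarith
      have h2 : 2 - 2*n₃ ≤ 4*δ + ε^2/8 := by
        rw [hn₃def]; linarith [hτk₃', h1']
      have h3 : 4*δ ≤ ε^2/256 := by
        rw [hδdef]
        have h4 : ε^4 = ε^2*ε^2 := by ring
        have h5 : ε^2*ε^2 ≤ ε^2*1 := mul_le_mul_of_nonneg_left hε2 (sq_nonneg ε)
        linarith
      linarith
    have hui : ∀ i, dist (u i) (x i) < ε := by
      intro i
      have h1 : ‖(u - x) i‖^2 ≤ 2 - 2*α := by
        rw [← hsumR]
        exact Finset.single_le_sum (f := fun j => ‖(u - x) j‖^2)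
          (fun j _ => by positivity) (Finset.mem_univ i)
      have h2 : dist (u i) (x i) = ‖(u - x) i‖ := by
        simp [dist_eq_norm]
      rw [h2]
      exact lt_of_sq_le_quarter _ _ hε (by linarith)
    have huU : u ∈ U := by
      rw [hUV]
      refine ⟨hball ?_, hu1⟩
      rw [Metric.mem_ball]
      calc dist u x < ε := (dist_pi_lt_iff hε).mpr hui
        _ ≤ ε₀ := hεε₀
    exact ⟨u, huU, hfAu⟩
end

section
/- For every 2-by-2 complex matrix A, the multivalued inverse f_A⁻¹ is strongly continuous on all of F(A): for every z ∈ F(A), every unit vector x with x*Ax = z, and every ε > 0, there is δ > 0 such that every z' ∈ F(A) with |z' − z| < δ has a unit vector x' with x'*Ax' = z' lying within projective distance ε of x. -/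
open Matrix

open scoped RealInnerProductSpace
set_option maxHeartbeats 1000000

noncomputable def bl (x : Fin 2 → ℂ) : EuclideanSpace ℝ (Fin 3) :=
  WithLp.toLp 2 ![2 * ((starRingEnd ℂ) (x 0) * x 1).re, 2 * ((starRingEnd ℂ) (x 0) * x 1).im,
    Complex.normSq (x 0) - Complex.normSq (x 1)]

lemma abs_sqrt_sub_sqrt (a b : ℝ) (ha : 0 ≤ a) (hb : 0 ≤ b) :
    |Real.sqrt a - Real.sqrt b| ≤ Real.sqrt |a - b| := by
  have key : ∀ u v : ℝ, 0 ≤ u → u ≤ v → Real.sqrt v - Real.sqrt u ≤ Real.sqrt (v - u) := by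
    intro u v hu huv
    nlinarith [Real.sq_sqrt hu, Real.sq_sqrt (le_trans hu huv), Real.sq_sqrt (sub_nonneg.2 huv),
      Real.sqrt_nonneg u, Real.sqrt_nonneg v, Real.sqrt_nonneg (v-u),
      mul_nonneg (Real.sqrt_nonneg u) (Real.sqrt_nonneg (v-u))]
  rcases le_total a b with h | h
  · rw [abs_of_nonpos (by nlinarith [Real.sqrt_le_sqrt h]), abs_of_nonpos (by linarith)]
    have := key a b ha h
    simpa [neg_sub] using this
  · rw [abs_of_nonneg (by nlinarith [Real.sqrt_le_sqrt h]), abs_of_nonneg (by linarith)]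
    exact key b a hb h

lemma lower_bound_aux {E : Type*} [NormedAddCommGroup E] [InnerProductSpace ℝ E]
    [FiniteDimensional ℝ E] (L : E →ₗ[ℝ] ℂ) :
    ∃ C : ℝ, 0 < C ∧ ∀ q : (LinearMap.ker L)ᗮ, ‖(q : E)‖ ≤ C * ‖L q‖ := by
  set K := LinearMap.ker L
  set Kp := Kᗮ
  have hinj : Function.Injective (L.comp Kp.subtype) := by
    intro a b hab
    have h : (a : E) - (b : E) ∈ K := by
      have : L ((a:E) - b) = 0 := by
        rw [map_sub]
        simpa [sub_eq_zero] using hab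
      exact this
    have h2 : (a : E) - b ∈ Kp := sub_mem a.2 b.2
    have h3 : (a:E) - b = 0 := by
      have h4 := (Submodule.mem_orthogonal _ _).mp h2 _ h
      exact inner_self_eq_zero.mp h4
    exact Subtype.ext (sub_eq_zero.mp h3)
  let e : Kp ≃ₗ[ℝ] LinearMap.range (L.comp Kp.subtype) := LinearEquiv.ofInjective _ hinj
  let e' := e.toContinuousLinearEquiv
  have ha := e'.antilipschitz
  set C : ℝ := max 1 ‖(e'.symm.toContinuousLinearMap)‖₊ with hC
  refine ⟨C, lt_of_lt_of_le one_pos (le_max_left _ _), fun q => ?_⟩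
  have h1 : ‖q‖ ≤ (‖e'.symm.toContinuousLinearMap‖₊ : ℝ) * ‖e' q‖ := by
    have := ha.le_mul_dist q 0
    simpa [dist_eq_norm] using this
  have h2 : ‖e' q‖ = ‖L q‖ := by
    show ‖((e q : _) : ℂ)‖ = _
    simp only [e, LinearEquiv.ofInjective, LinearEquiv.ofLeftInverse_apply]
    rfl
  calc ‖(q:E)‖ = ‖q‖ := rfl
    _ ≤ (‖e'.symm.toContinuousLinearMap‖₊ : ℝ) * ‖e' q‖ := h1
    _ ≤ C * ‖L q‖ := by
        rw [h2]
        exact mul_le_mul_of_nonneg_right (le_max_right _ _) (norm_nonneg _)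

open scoped RealInnerProductSpace



lemma geom_key {E : Type*} [NormedAddCommGroup E] [InnerProductSpace ℝ E]
    [FiniteDimensional ℝ E] (L : E →ₗ[ℝ] ℂ) (n0 : E) (h0 : ‖n0‖ = 1)
    (ε : ℝ) (hε : 0 < ε) :
    ∃ δ > (0:ℝ), ∀ n1 : E, ‖n1‖ = 1 → ‖L n1 - L n0‖ < δ →
      ∃ n' : E, ‖n'‖ = 1 ∧ L n' = L n1 ∧ ‖n' - n0‖ < ε := by
  obtain ⟨C, hC, hCb⟩ := lower_bound_aux L
  set K := LinearMap.ker L with hK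
  set Kp := Kᗮ with hKp
  have horth : Kpᗮ = K := Submodule.orthogonal_orthogonal K
  set p0 : Kp := Kp.orthogonalProjectionOnto n0 with hp0
  set w0 : E := n0 - (p0 : E) with hw0def
  have hw0K : w0 ∈ K := horth ▸ Kp.sub_starProjection_mem_orthogonal n0
  -- choose the direction u in K
  obtain ⟨u, huK, hu_eq, hu_norm⟩ :
      ∃ u, u ∈ K ∧ w0 = ‖w0‖ • u ∧ (‖u‖ = 1 ∨ u = 0 ∧ K = ⊥) := by
    by_cases hw : w0 = 0
    · by_cases hKbot : K = ⊥
      · exact ⟨0, K.zero_mem, by simp [hw], Or.inr ⟨rfl, hKbot⟩⟩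
      · obtain ⟨v, hvK, hv0⟩ := Submodule.ne_bot_iff K |>.mp hKbot
        exact ⟨‖v‖⁻¹ • v, K.smul_mem _ hvK, by simp [hw], Or.inl (norm_smul_inv_norm hv0)⟩
    · refine ⟨‖w0‖⁻¹ • w0, K.smul_mem _ hw0K, ?_, Or.inl (norm_smul_inv_norm hw)⟩
      rw [smul_smul, mul_inv_cancel₀ (norm_ne_zero_iff.mpr hw), one_smul]
  have hu_le : ‖u‖ ≤ 1 := by rcases hu_norm with h | ⟨h, _⟩ <;> simp [h]
  -- Pythagoras facts
  have pyth : ∀ n : E, ‖n‖ = 1 →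
      ‖((Kp.orthogonalProjectionOnto n : E))‖ ^ 2 + ‖n - (Kp.orthogonalProjectionOnto n : E)‖ ^ 2 = 1 := by
    intro n hn
    have hip : (inner ℝ ((Kp.orthogonalProjectionOnto n : E)) (n - (Kp.orthogonalProjectionOnto n : E)) : ℝ) = 0 :=
      Submodule.inner_right_of_mem_orthogonal (Kp.orthogonalProjectionOnto n).2
        (Kp.sub_starProjection_mem_orthogonal n)
    have := norm_add_sq_real ((Kp.orthogonalProjectionOnto n : E)) (n - (Kp.orthogonalProjectionOnto n : E))
    rw [hip] at this
    simp only [add_sub_cancel] at this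
    rw [hn] at this
    linarith
  have hpy0 := pyth n0 h0
  have hp0le : ‖(p0 : E)‖ ≤ 1 := by nlinarith [sq_nonneg ‖n0 - (p0:E)‖, norm_nonneg (p0:E)]
  have hw0n : ‖w0‖ = Real.sqrt (1 - ‖(p0 : E)‖ ^ 2) := by
    rw [← Real.sqrt_sq (norm_nonneg w0)]
    congr 1
    rw [hw0def]; linarith
  -- the δ
  refine ⟨min (ε / (2 * C)) (ε ^ 2 / (9 * C)), lt_min (by positivity) (by positivity), ?_⟩
  intro n1 h1 hd
  set d := ‖L n1 - L n0‖ with hdd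
  have hd0 : 0 ≤ d := norm_nonneg _
  set p1 : Kp := Kp.orthogonalProjectionOnto n1 with hp1
  have hw1K : n1 - (p1 : E) ∈ K := horth ▸ Kp.sub_starProjection_mem_orthogonal n1
  have hpy1 := pyth n1 h1
  have hp1le : ‖(p1 : E)‖ ≤ 1 := by nlinarith [sq_nonneg ‖n1 - (p1:E)‖, norm_nonneg (p1:E)]
  have hLp : ∀ n : E, L ((Kp.orthogonalProjectionOnto n : E)) = L n := by
    intro n
    have hmem : n - (Kp.orthogonalProjectionOnto n : E) ∈ K := by
      have h := Kp.sub_starProjection_mem_orthogonal n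
      rwa [horth] at h
    have : L (n - (Kp.orthogonalProjectionOnto n : E)) = 0 := LinearMap.mem_ker.mp hmem
    rw [map_sub, sub_eq_zero] at this
    exact this.symm
  have hq : ‖(p1 : E) - (p0 : E)‖ ≤ C * d := by
    have h1' : ((p1 - p0 : Kp) : E) = (p1 : E) - (p0 : E) := rfl
    have h2' : L ((p1 - p0 : Kp) : E) = L n1 - L n0 := by
      rw [h1', map_sub, hLp, hLp]
    have := hCb (p1 - p0)
    rw [h2'] at this
    rw [← h1']
    exact this
  set r : ℝ := Real.sqrt (1 - ‖(p1 : E)‖ ^ 2) with hr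
  have hr0 : 0 ≤ r := Real.sqrt_nonneg _
  have hr2 : r ^ 2 = 1 - ‖(p1 : E)‖ ^ 2 := Real.sq_sqrt (by nlinarith)
  refine ⟨(p1 : E) + r • u, ?_, ?_, ?_⟩
  · -- unit norm
    have hip : (inner ℝ ((p1 : E)) (r • u) : ℝ) = 0 :=
      Submodule.inner_right_of_mem_orthogonal p1.2 (by rw [horth]; exact K.smul_mem _ huK)
    have hsq := norm_add_sq_real ((p1 : E)) (r • u)
    rw [hip] at hsq
    have hnorm2 : ‖(p1 : E) + r • u‖ ^ 2 = 1 := by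
      rcases hu_norm with h | ⟨h, hKbot⟩
      · rw [hsq, norm_smul, h] ; simp [abs_of_nonneg hr0]; nlinarith
      · have : n1 - (p1 : E) = 0 := by rw [hKbot] at hw1K; simpa using hw1K
        have hp1n : ‖(p1 : E)‖ = 1 := by
          rw [sub_eq_zero] at this; rw [← this, h1]
        rw [hsq, h]
        simp [hp1n]
    rw [← Real.sqrt_sq (norm_nonneg _), hnorm2, Real.sqrt_one]
  · -- maps to L n1
    have hLu : L u = 0 := huK
    rw [_root_.map_add, hLp, _root_.map_smul, hLu, smul_zero, add_zero]
  · -- distance estimate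
    have split : (p1 : E) + r • u - n0 = ((p1 : E) - (p0 : E)) + (r - ‖w0‖) • u := by
      rw [hw0def] at hu_eq
      rw [sub_smul]
      have : n0 = (p0 : E) + ‖w0‖ • u := by
        rw [← hu_eq]; abel
      rw [this]; abel
    rw [split]
    have hbound2 : ‖(r - ‖w0‖) • u‖ ≤ |r - ‖w0‖| := by
      rw [norm_smul, Real.norm_eq_abs]
      calc |r - ‖w0‖| * ‖u‖ ≤ |r - ‖w0‖| * 1 := by
            exact mul_le_mul_of_nonneg_left hu_le (abs_nonneg _)
        _ = |r - ‖w0‖| := mul_one _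
    have hsqrt : |r - ‖w0‖| ≤ Real.sqrt (2 * (C * d)) := by
      rw [hw0n, hr]
      calc |Real.sqrt (1 - ‖(p1:E)‖^2) - Real.sqrt (1 - ‖(p0:E)‖^2)|
          ≤ Real.sqrt |(1 - ‖(p1:E)‖^2) - (1 - ‖(p0:E)‖^2)| :=
            abs_sqrt_sub_sqrt _ _ (by nlinarith) (by nlinarith)
        _ ≤ Real.sqrt (2 * (C * d)) := by
            apply Real.sqrt_le_sqrt
            have habs : |(1 - ‖(p1:E)‖^2) - (1 - ‖(p0:E)‖^2)| = |‖(p0:E)‖^2 - ‖(p1:E)‖^2| := by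
              congr 1; ring
            rw [habs]
            have : |‖(p0:E)‖^2 - ‖(p1:E)‖^2| ≤ 2 * ‖(p0:E) - (p1:E)‖ := by
              have h3 : |‖(p0:E)‖ - ‖(p1:E)‖| ≤ ‖(p0:E) - (p1:E)‖ := abs_norm_sub_norm_le _ _
              have h4 : |‖(p0:E)‖^2 - ‖(p1:E)‖^2| = (‖(p0:E)‖ + ‖(p1:E)‖) * |‖(p0:E)‖ - ‖(p1:E)‖| := by
                rw [← abs_of_nonneg (by positivity : (0:ℝ) ≤ ‖(p0:E)‖ + ‖(p1:E)‖), ← abs_mul]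
                congr 1; ring
              rw [h4]
              calc (‖(p0:E)‖ + ‖(p1:E)‖) * |‖(p0:E)‖ - ‖(p1:E)‖|
                  ≤ 2 * |‖(p0:E)‖ - ‖(p1:E)‖| := by
                    apply mul_le_mul_of_nonneg_right (by linarith) (abs_nonneg _)
                _ ≤ 2 * ‖(p0:E) - (p1:E)‖ := by linarith
            calc |‖(p0:E)‖^2 - ‖(p1:E)‖^2| ≤ 2 * ‖(p0:E) - (p1:E)‖ := this
              _ = 2 * ‖(p1:E) - (p0:E)‖ := by rw [norm_sub_rev]
              _ ≤ 2 * (C * d) := by linarith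
    have hδ1 : d < ε / (2 * C) := lt_of_lt_of_le hd (min_le_left _ _)
    have hδ2 : d < ε ^ 2 / (9 * C) := lt_of_lt_of_le hd (min_le_right _ _)
    have hterm1 : ‖(p1 : E) - (p0 : E)‖ < ε / 2 := by
      calc ‖(p1 : E) - (p0 : E)‖ ≤ C * d := hq
        _ < C * (ε / (2 * C)) := by exact mul_lt_mul_of_pos_left hδ1 hC
        _ = ε / 2 := by field_simp
    have hterm2 : Real.sqrt (2 * (C * d)) < ε / 2 := by
      rw [Real.sqrt_lt' (by positivity)]
      have : 2 * (C * d) < 2 * (C * (ε ^ 2 / (9 * C))) := by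
        apply mul_lt_mul_of_pos_left (mul_lt_mul_of_pos_left hδ2 hC) (by norm_num)
      have heq : 2 * (C * (ε ^ 2 / (9 * C))) = 2 * ε ^ 2 / 9 := by field_simp
      nlinarith
    calc ‖((p1 : E) - (p0 : E)) + (r - ‖w0‖) • u‖
        ≤ ‖(p1 : E) - (p0 : E)‖ + ‖(r - ‖w0‖) • u‖ := norm_add_le _ _
      _ ≤ ‖(p1 : E) - (p0 : E)‖ + Real.sqrt (2 * (C * d)) := by linarith [le_trans hbound2 hsqrt]
      _ < ε / 2 + ε / 2 := by linarith
      _ = ε := by ring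

lemma star_dot (x : Fin 2 → ℂ) (hx : star x ⬝ᵥ x = 1) :
    (starRingEnd ℂ) (x 0) * x 0 + (starRingEnd ℂ) (x 1) * x 1 = 1 := by
  rw [← hx]; simp [dotProduct, Fin.sum_univ_two, Complex.star_def]

lemma unit_normSq (x : Fin 2 → ℂ) (hx : star x ⬝ᵥ x = 1) :
    Complex.normSq (x 0) + Complex.normSq (x 1) = 1 := by
  have h : ((Complex.normSq (x 0) + Complex.normSq (x 1) : ℝ) : ℂ) = 1 := by
    push_cast
    rw [Complex.normSq_eq_conj_mul_self, Complex.normSq_eq_conj_mul_self]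
    exact star_dot x hx
  exact_mod_cast h

lemma bl_sum (x : Fin 2 → ℂ) (hx : star x ⬝ᵥ x = 1) :
    ∑ i, (bl x i) ^ 2 = 1 := by
  have h := unit_normSq x hx
  have expand : ∑ i, (bl x i) ^ 2
      = (2 * ((starRingEnd ℂ) (x 0) * x 1).re)^2 + (2 * ((starRingEnd ℂ) (x 0) * x 1).im)^2
        + (Complex.normSq (x 0) - Complex.normSq (x 1))^2 := by
    simp [bl, Fin.sum_univ_three]
  rw [expand]
  have : (2 * ((starRingEnd ℂ) (x 0) * x 1).re)^2 + (2 * ((starRingEnd ℂ) (x 0) * x 1).im)^2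
        + (Complex.normSq (x 0) - Complex.normSq (x 1))^2
      = (Complex.normSq (x 0) + Complex.normSq (x 1))^2 := by
    simp only [Complex.normSq_apply, Complex.mul_re, Complex.mul_im,
      Complex.conj_re, Complex.conj_im]
    ring
  rw [this, h, one_pow]

lemma bl_norm (x : Fin 2 → ℂ) (hx : star x ⬝ᵥ x = 1) : ‖bl x‖ = 1 := by
  rw [EuclideanSpace.norm_eq]
  have : ∑ i, ‖bl x i‖ ^ 2 = 1 := by
    simp only [Real.norm_eq_abs, sq_abs]
    exact bl_sum x hx
  rw [this, Real.sqrt_one]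

noncomputable def Lmap (a b d : ℂ) : EuclideanSpace ℝ (Fin 3) →ₗ[ℝ] ℂ where
  toFun n := (n 0 : ℂ) * a + (n 1 : ℂ) * b + (n 2 : ℂ) * d
  map_add' p q := by
    show ((((p + q) : EuclideanSpace ℝ (Fin 3)) 0 : ℝ) : ℂ) * a + _ + _ = _
    simp only [PiLp.add_apply]
    push_cast; ring
  map_smul' r p := by
    show ((((r • p) : EuclideanSpace ℝ (Fin 3)) 0 : ℝ) : ℂ) * a + _ + _ = _
    simp only [PiLp.smul_apply, smul_eq_mul, RingHom.id_apply, Complex.real_smul]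
    push_cast; ring

lemma fA_eq (A : Matrix (Fin 2) (Fin 2) ℂ) (x : Fin 2 → ℂ) (hx : star x ⬝ᵥ x = 1) :
    fA A x = Lmap ((A 0 1 + A 1 0)/2) (Complex.I*(A 0 1 - A 1 0)/2) ((A 0 0 - A 1 1)/2) (bl x)
      + (A 0 0 + A 1 1)/2 := by
  have hx' := star_dot x hx
  have h1 : ((2 * ((starRingEnd ℂ) (x 0) * x 1).re : ℝ) : ℂ)
      = (starRingEnd ℂ) (x 0) * x 1 + x 0 * (starRingEnd ℂ) (x 1) := by
    rw [(Complex.add_conj ((starRingEnd ℂ) (x 0) * x 1)).symm]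
    rw [RingHom.map_mul, Complex.conj_conj]
  have h2 : ((2 * ((starRingEnd ℂ) (x 0) * x 1).im : ℝ) : ℂ) * Complex.I
      = (starRingEnd ℂ) (x 0) * x 1 - x 0 * (starRingEnd ℂ) (x 1) := by
    rw [(Complex.sub_conj ((starRingEnd ℂ) (x 0) * x 1)).symm]
    rw [RingHom.map_mul, Complex.conj_conj]
  have h3 : ((Complex.normSq (x 0) - Complex.normSq (x 1) : ℝ) : ℂ)
      = (starRingEnd ℂ) (x 0) * x 0 - (starRingEnd ℂ) (x 1) * x 1 := by
    push_cast
    rw [Complex.normSq_eq_conj_mul_self, Complex.normSq_eq_conj_mul_self]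
  show star x ⬝ᵥ A.mulVec x = _
  simp only [Lmap, LinearMap.coe_mk, AddHom.coe_mk, bl, dotProduct, Matrix.mulVec,
    Fin.sum_univ_two, Pi.star_apply, Matrix.cons_val_zero, Matrix.cons_val_one, Matrix.head_cons,
    Matrix.cons_val_two, Matrix.tail_cons, Complex.star_def]
  push_cast at h1 h2 h3 ⊢
  linear_combination (-(A 0 1 + A 1 0)/2) * h1 + (-(A 0 1 - A 1 0)/2) * h2
    + (-(A 0 0 - A 1 1)/2) * h3 + ((A 0 0 + A 1 1)/2) * hx'

lemma sum_of_norm_one (m : EuclideanSpace ℝ (Fin 3)) (hm : ‖m‖ = 1) :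
    (m 0)^2 + (m 1)^2 + (m 2)^2 = 1 := by
  rw [EuclideanSpace.norm_eq] at hm
  have h : ∑ i : Fin 3, ‖m i‖ ^ 2 = 1 := by
    have := Real.sqrt_eq_one.mp hm
    exact this
  simpa [Fin.sum_univ_three, Real.norm_eq_abs, sq_abs] using h

lemma exists_x_of_bl (m : EuclideanSpace ℝ (Fin 3)) (hm : ‖m‖ = 1) :
    ∃ x : Fin 2 → ℂ, star x ⬝ᵥ x = 1 ∧ bl x = m := by
  have hsum := sum_of_norm_one m hm
  by_cases h2 : m 2 = -1
  · refine ⟨![0, 1], by simp [dotProduct, Fin.sum_univ_two], ?_⟩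
    have h01 : (m 0)^2 + (m 1)^2 = 0 := by rw [h2] at hsum; nlinarith
    have h0 : m 0 = 0 := by nlinarith [sq_nonneg (m 0), sq_nonneg (m 1)]
    have h1 : m 1 = 0 := by nlinarith [sq_nonneg (m 0), sq_nonneg (m 1)]
    ext i
    fin_cases i <;> simp [bl, h0, h1, h2]
  · have hm2ge : -1 ≤ m 2 := by nlinarith [sq_nonneg (m 0), sq_nonneg (m 1)]
    have hm2gt : -1 < m 2 := lt_of_le_of_ne hm2ge (Ne.symm h2)
    set t : ℝ := Real.sqrt ((1 + m 2)/2) with ht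
    have ht0 : 0 < t := Real.sqrt_pos.mpr (by linarith)
    have ht2 : t^2 = (1 + m 2)/2 := Real.sq_sqrt (by linarith)
    have key : (m 0/(2*t))^2 + (m 1/(2*t))^2 = (1 - m 2)/2 := by
      field_simp
      nlinarith [ht2, hsum]
    refine ⟨![(t:ℂ), (↑(m 0/(2*t)) + ↑(m 1/(2*t))*Complex.I : ℂ)], ?_, ?_⟩
    · show star _ ⬝ᵥ _ = 1
      simp only [dotProduct, Fin.sum_univ_two, Pi.star_apply,
        Matrix.cons_val_zero, Matrix.cons_val_one, Matrix.head_cons, Complex.star_def,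
        ← Complex.normSq_eq_conj_mul_self]
      rw [Complex.normSq_ofReal, Complex.normSq_add_mul_I]
      have h : t * t + ((m 0/(2*t))^2 + (m 1/(2*t))^2) = 1 := by nlinarith [ht2, key]
      exact_mod_cast h
    · ext i
      have hc : (starRingEnd ℂ) ((t:ℝ):ℂ) * (↑(m 0/(2*t)) + ↑(m 1/(2*t))*Complex.I)
          = ↑(t * (m 0/(2*t))) + ↑(t * (m 1/(2*t)))*Complex.I := by
        rw [Complex.conj_ofReal]
        push_cast; ring
      fin_cases i
      · simp only [bl, WithLp.ofLp_toLp, Matrix.cons_val_zero, Matrix.cons_val_one, Matrix.head_cons]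
        rw [hc]
        simp only [Complex.add_re, Complex.ofReal_re, Complex.mul_re, Complex.I_re,
          Complex.ofReal_im, Complex.I_im]
        show 2 * _ = m 0
        field_simp
        ring
      · simp only [bl, WithLp.ofLp_toLp, Matrix.cons_val_zero, Matrix.cons_val_one, Matrix.head_cons]
        rw [hc]
        simp only [Complex.add_im, Complex.ofReal_im, Complex.mul_im, Complex.I_im,
          Complex.ofReal_re, Complex.I_re]
        show 2 * _ = m 1
        field_simp
        ring
      · simp only [bl, WithLp.ofLp_toLp, Matrix.cons_val_zero, Matrix.cons_val_one, Matrix.head_cons,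
          Matrix.cons_val_two, Matrix.tail_cons]
        show Complex.normSq ((t:ℝ):ℂ) - Complex.normSq (↑(m 0/(2*t)) + ↑(m 1/(2*t))*Complex.I) = m 2
        rw [Complex.normSq_ofReal, Complex.normSq_add_mul_I]
        have htt : t*t = (1 + m 2)/2 := by nlinarith [ht2]
        linarith [key, htt]

-- the key algebraic identity: |<x,y>|^2 = (1 + bl x ∙ bl y)/2
lemma inner_normSq_identity (x y : Fin 2 → ℂ) (hx : star x ⬝ᵥ x = 1) (hy : star y ⬝ᵥ y = 1) :
    Complex.normSq ((starRingEnd ℂ) (x 0) * y 0 + (starRingEnd ℂ) (x 1) * y 1)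
      = (1 + ∑ i, bl x i * bl y i) / 2 := by
  have hx' : Complex.normSq (x 0) + Complex.normSq (x 1) = 1 := unit_normSq x hx
  have hy' : Complex.normSq (y 0) + Complex.normSq (y 1) = 1 := unit_normSq y hy
  simp only [Complex.normSq_apply, Complex.mul_re, Complex.mul_im, Complex.add_re,
    Complex.add_im, Complex.conj_re, Complex.conj_im] at hx' hy' ⊢
  simp only [bl, Fin.sum_univ_three, Matrix.cons_val_zero, Matrix.cons_val_one,
    Matrix.head_cons, Matrix.cons_val_two, Matrix.tail_cons, Complex.normSq_apply,
    Complex.mul_re, Complex.mul_im, Complex.conj_re, Complex.conj_im]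
  linear_combination (((y 0).re^2 + (y 0).im^2 + (y 1).re^2 + (y 1).im^2)/2) * hx' + (1/2) * hy'

lemma enorm_sq_eq (x y : Fin 2 → ℂ) (hx : star x ⬝ᵥ x = 1) (hy : star y ⬝ᵥ y = 1)
    (ω : ℂ) (hω : ‖ω‖ = 1) :
    (_root_.enorm (x - ω • y))^2
      = 2 - 2 * (ω * ((starRingEnd ℂ) (x 0) * y 0 + (starRingEnd ℂ) (x 1) * y 1)).re := by
  have hx' : Complex.normSq (x 0) + Complex.normSq (x 1) = 1 := unit_normSq x hx
  have hy' : Complex.normSq (y 0) + Complex.normSq (y 1) = 1 := unit_normSq y hy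
  have hω' : Complex.normSq ω = 1 := by
    have : ‖ω‖^2 = 1 := by rw [hω]; norm_num
    rwa [Complex.sq_norm] at this
  rw [_root_.enorm]
  rw [Real.sq_sqrt (by positivity)]
  have expand : ∑ i, ‖(x - ω • y) i‖^2
      = Complex.normSq (x 0 - ω * y 0) + Complex.normSq (x 1 - ω * y 1) := by
    simp [Fin.sum_univ_two, Complex.sq_norm, Pi.sub_apply, Pi.smul_apply, smul_eq_mul]
  rw [expand]
  simp only [Complex.normSq_apply, Complex.sub_re, Complex.sub_im, Complex.mul_re,
    Complex.mul_im, Complex.add_re, Complex.add_im, Complex.conj_re, Complex.conj_im] at hx' hy' hω' ⊢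
  linear_combination hx' + hω' + (ω.re^2 + ω.im^2) * hy'

lemma projDist_le_bl (x y : Fin 2 → ℂ) (hx : star x ⬝ᵥ x = 1) (hy : star y ⬝ᵥ y = 1) :
    projDist x y ≤ ‖bl x - bl y‖ := by
  set g : ℂ := (starRingEnd ℂ) (x 0) * y 0 + (starRingEnd ℂ) (x 1) * y 1 with hg
  set ω : ℂ := if g = 0 then 1 else (starRingEnd ℂ) g / ((‖g‖ : ℝ) : ℂ) with hωdef
  have hω : ‖ω‖ = 1 := by
    by_cases h : g = 0
    · simp [hωdef, h]
    · rw [hωdef, if_neg h, norm_div, Complex.norm_conj,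
        Complex.norm_real, Real.norm_eq_abs, abs_of_nonneg (norm_nonneg g),
        div_self (norm_ne_zero_iff.mpr h)]
  have hωg : ω * g = ((‖g‖ : ℝ) : ℂ) := by
    by_cases h : g = 0
    · simp [hωdef, h]
    · rw [hωdef, if_neg h, div_mul_eq_mul_div, ← Complex.normSq_eq_conj_mul_self,
        Complex.normSq_eq_norm_sq]
      push_cast
      have hne : ((‖g‖ : ℝ) : ℂ) ≠ 0 := by
        simpa using norm_ne_zero_iff.mpr h
      field_simp
  have hre : (ω * g).re = ‖g‖ := by rw [hωg]; exact Complex.ofReal_re _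
  have key := enorm_sq_eq x y hx hy ω hω
  rw [← hg, hre] at key
  set dot : ℝ := ∑ i, bl x i * bl y i with hdot
  have hid : ‖g‖ ^ 2 = (1 + dot)/2 := by
    rw [Complex.sq_norm]
    exact inner_normSq_identity x y hx hy
  have hbl : ‖bl x - bl y‖^2 = 2 - 2*dot := by
    rw [EuclideanSpace.norm_eq, Real.sq_sqrt (by positivity)]
    have e1 := bl_sum x hx
    have e2 := bl_sum y hy
    simp only [Fin.sum_univ_three, PiLp.sub_apply, Real.norm_eq_abs, sq_abs] at e1 e2 ⊢
    simp only [hdot, Fin.sum_univ_three]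
    ring_nf
    nlinarith [e1, e2]
  have hd1 : dot ≤ 1 := by nlinarith [sq_nonneg ‖bl x - bl y‖]
  have habs : 0 ≤ ‖g‖ := norm_nonneg g
  have hg1 : ‖g‖ ≤ 1 := by nlinarith
  have hdle : dot ≤ ‖g‖ := by
    nlinarith [mul_nonneg (sub_nonneg.2 hg1) (by linarith : (0:ℝ) ≤ 2*‖g‖ + 1)]
  have hmem : _root_.enorm (x - ω • y) ∈ {d | ∃ ω' : ℂ, ‖ω'‖ = 1 ∧ d = _root_.enorm (x - ω' • y)} :=
    ⟨ω, hω, rfl⟩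
  have hbdd : BddBelow {d | ∃ ω' : ℂ, ‖ω'‖ = 1 ∧ d = _root_.enorm (x - ω' • y)} := by
    refine ⟨0, fun d hd => ?_⟩
    obtain ⟨ω', _, rfl⟩ := hd
    exact Real.sqrt_nonneg _
  have step1 : projDist x y ≤ _root_.enorm (x - ω • y) := csInf_le hbdd hmem
  have step2 : _root_.enorm (x - ω • y) ≤ ‖bl x - bl y‖ := by
    have ha : 0 ≤ _root_.enorm (x - ω • y) := Real.sqrt_nonneg _
    have hb : 0 ≤ ‖bl x - bl y‖ := norm_nonneg _
    rw [← Real.sqrt_sq ha, ← Real.sqrt_sq hb]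
    apply Real.sqrt_le_sqrt
    rw [key, hbl]
    linarith
  linarith

theorem strong_continuity_2x2
    (A : Matrix (Fin 2) (Fin 2) ℂ) :
    ∀ z ∈ NR A, ∀ x : Fin 2 → ℂ, star x ⬝ᵥ x = 1 → fA A x = z →
      ∀ ε > (0:ℝ), ∃ δ > (0:ℝ), ∀ z' ∈ NR A, ‖z' - z‖ < δ →
        ∃ x', star x' ⬝ᵥ x' = 1 ∧ fA A x' = z' ∧ projDist x x' < ε := by
  intro z hz x hxunit hfz ε hε
  set L := Lmap ((A 0 1 + A 1 0)/2) (Complex.I*(A 0 1 - A 1 0)/2) ((A 0 0 - A 1 1)/2) with hL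
  have h0 : ‖bl x‖ = 1 := bl_norm x hxunit
  obtain ⟨δ, hδ0, hδ⟩ := geom_key L (bl x) h0 ε hε
  refine ⟨δ, hδ0, ?_⟩
  intro z' hz' hdist
  obtain ⟨x1, hx1u, hx1f⟩ := hz'
  have h1 : ‖bl x1‖ = 1 := bl_norm x1 hx1u
  have hL1 : ‖L (bl x1) - L (bl x)‖ < δ := by
    have e1 : fA A x1 = L (bl x1) + (A 0 0 + A 1 1)/2 := fA_eq A x1 hx1u
    have e0 : fA A x = L (bl x) + (A 0 0 + A 1 1)/2 := fA_eq A x hxunit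
    have heq : L (bl x1) - L (bl x) = z' - z := by
      rw [← hx1f, ← hfz, e1, e0]; ring
    rw [heq]
    exact hdist
  obtain ⟨n', hn'1, hn'L, hn'close⟩ := hδ (bl x1) h1 hL1
  obtain ⟨x', hx'u, hx'bl⟩ := exists_x_of_bl n' hn'1
  refine ⟨x', hx'u, ?_, ?_⟩
  · rw [fA_eq A x' hx'u, hx'bl, hn'L, ← hx1f, fA_eq A x1 hx1u]
  · calc projDist x x' ≤ ‖bl x - bl x'‖ := projDist_le_bl x x' hxunit hx'u
      _ = ‖n' - bl x‖ := by rw [hx'bl, norm_sub_rev]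
      _ < ε := hn'close
end

section
/- Let A₁ = [[0,2],[0,0]], A₂ = [1], and A = A₁ ⊕ A₂ ∈ M₃(ℂ). Then z = 1 lies on the boundary of F(A) (which equals the closed disk of radius 1 centered at 0), the vector e₃ = [0,0,1]ᵀ satisfies e₃*Ae₃ = 1, but every unit vector x with x*Ax = ζ for ζ ∈ ∂F(A), ζ ≠ 1, has third coordinate zero and hence ‖x − ωe₃‖ ≥ √2 for all unimodular ω. Therefore f_A⁻¹ is not strongly continuous at z = 1. -/
open Matrix

open Complex in
lemma dot_self_eq_s13 (x : Fin 3 → ℂ) :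
    star x ⬝ᵥ x = ((normSq (x 0) + normSq (x 1) + normSq (x 2) : ℝ) : ℂ) := by
  simp [dotProduct, Fin.sum_univ_three, Pi.star_apply, ← Complex.normSq_eq_conj_mul_self]

open Complex in
lemma fA_eq_s13 (x : Fin 3 → ℂ) :
    fA !![0,2,0; 0,0,0; 0,0,1] x
      = 2 * (starRingEnd ℂ) (x 0) * x 1 + ((normSq (x 2) : ℝ) : ℂ) := by
  simp [fA, dotProduct, Matrix.mulVec, Fin.sum_univ_three, Pi.star_apply,
    Matrix.vecHead, Matrix.vecTail, ← Complex.normSq_eq_conj_mul_self]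
  ring

open Complex in
lemma NR_eq : NR !![0,2,0; 0,0,0; 0,0,1] = Metric.closedBall (0:ℂ) 1 := by
  ext z
  simp only [Metric.mem_closedBall, dist_zero_right]
  constructor
  · rintro ⟨x, hx, hf⟩
    rw [dot_self_eq_s13] at hx
    have hx' : normSq (x 0) + normSq (x 1) + normSq (x 2) = 1 := by
      exact_mod_cast hx
    rw [fA_eq_s13] at hf
    have h0 : ‖x 0‖ ^ 2 = normSq (x 0) := Complex.sq_norm _
    have h1 : ‖x 1‖ ^ 2 = normSq (x 1) := Complex.sq_norm _
    have h2 : (0:ℝ) ≤ normSq (x 2) := normSq_nonneg _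
    calc ‖z‖ ≤ ‖2 * (starRingEnd ℂ) (x 0) * x 1‖
          + ‖((normSq (x 2) : ℝ) : ℂ)‖ := by
          rw [← hf]; exact norm_add_le _ _
      _ ≤ 1 := by
          rw [norm_mul, norm_mul, Complex.norm_conj, Complex.norm_real, Real.norm_eq_abs,
            _root_.abs_of_nonneg h2]
          have : ‖(2:ℂ)‖ = 2 := by norm_num
          rw [this]
          nlinarith [norm_nonneg (x 0), norm_nonneg (x 1),
            sq_nonneg (‖x 0‖ - ‖x 1‖)]
  · intro hz
    set u := normSq z with hu
    have hu1 : u ≤ 1 := by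
      have := Complex.sq_norm z
      nlinarith [norm_nonneg z]
    have hu0 : 0 ≤ u := normSq_nonneg z
    set s := Real.sqrt (1 - u) with hsdef
    have hs0 : 0 ≤ s := Real.sqrt_nonneg _
    have hs2 : s ^ 2 = 1 - u := Real.sq_sqrt (by linarith)
    set a := Real.sqrt ((1 + s) / 2) with hadef
    have ha2 : a ^ 2 = (1 + s) / 2 := Real.sq_sqrt (by linarith)
    have ha0 : 0 < a := Real.sqrt_pos.mpr (by linarith)
    have haC : ((a : ℂ)) ≠ 0 := by exact_mod_cast ha0.ne'
    refine ⟨![(a:ℂ), z / (2 * a), 0], ?_, ?_⟩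
    · rw [dot_self_eq_s13]
      have : normSq ((z : ℂ) / (2 * a)) = u / (4 * a ^ 2) := by
        rw [normSq_div]
        have : normSq ((2 : ℂ) * a) = 4 * a ^ 2 := by
          simp [normSq_mul, Complex.normSq_ofReal]; ring
        rw [this, ← hu]
      simp only [Matrix.cons_val_zero, Matrix.cons_val_one, Matrix.head_cons,
        Matrix.cons_val_two, Matrix.tail_cons, this, Complex.normSq_ofReal, normSq_zero]
      rw [show (a * a) = a ^ 2 by ring, ha2]
      have key : (1 + s) / 2 + u / (4 * ((1 + s) / 2)) + 0 = 1 := by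
        have h1s : (1 + s) ≠ 0 := by linarith
        field_simp
        nlinarith
      norm_cast
    · rw [fA_eq_s13]
      simp only [Matrix.cons_val_zero, Matrix.cons_val_one, Matrix.head_cons,
        Matrix.cons_val_two, Matrix.tail_cons, normSq_zero, Complex.conj_ofReal]
      push_cast
      field_simp
      simp

open Complex in
lemma bdry_third_zero (x : Fin 3 → ℂ) (hx : star x ⬝ᵥ x = 1) (ζ : ℂ)
    (hζ : ‖ζ‖ = 1) (hζ1 : ζ ≠ 1)
    (hf : fA !![0,2,0; 0,0,0; 0,0,1] x = ζ) : x 2 = 0 := by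
  by_contra hc
  rw [dot_self_eq_s13] at hx
  have hx' : normSq (x 0) + normSq (x 1) + normSq (x 2) = 1 := by exact_mod_cast hx
  rw [fA_eq_s13] at hf
  set t := normSq (x 2) with ht
  have ht0 : 0 < t := normSq_pos.mpr hc
  set u := 2 * (starRingEnd ℂ) (x 0) * x 1 with hudef
  have habsu : ‖u‖ ≤ 1 - t := by
    have : ‖u‖ = 2 * ‖x 0‖ * ‖x 1‖ := by
      rw [hudef, norm_mul, norm_mul, Complex.norm_conj]
      norm_num
    rw [this]
    have h0 : ‖x 0‖ ^ 2 = normSq (x 0) := Complex.sq_norm _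
    have h1 : ‖x 1‖ ^ 2 = normSq (x 1) := Complex.sq_norm _
    nlinarith [sq_nonneg (‖x 0‖ - ‖x 1‖)]
  have hsq : (u.re + t) ^ 2 + u.im ^ 2 = 1 := by
    have : ‖u + (t:ℂ)‖ = 1 := by rw [hf]; exact hζ
    have h2 : normSq (u + (t:ℂ)) = 1 := by
      rw [← Complex.sq_norm, this]; norm_num
    rw [normSq_apply] at h2
    simp at h2
    nlinarith [h2]
  have husq : u.re ^ 2 + u.im ^ 2 ≤ (1 - t) ^ 2 := by
    have := Complex.sq_norm u
    rw [normSq_apply] at this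
    nlinarith [norm_nonneg u]
  have ht1 : t ≤ 1 := by nlinarith [normSq_nonneg (x 0), normSq_nonneg (x 1)]
  have hre : u.re = 1 - t := by nlinarith
  have him : u.im = 0 := by nlinarith
  apply hζ1
  rw [← hf]
  apply Complex.ext
  · simp [him, hre]
  · simp [him]

open Complex in
lemma enorm_sub_smul (x : Fin 3 → ℂ) (hx : normSq (x 0) + normSq (x 1) + normSq (x 2) = 1)
    (h2 : x 2 = 0) (ω : ℂ) (hω : ‖ω‖ = 1) :
    _root_.enorm (x - ω • ![0,0,1]) = Real.sqrt 2 := by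
  unfold _root_.enorm
  congr 1
  rw [Fin.sum_univ_three]
  simp only [Pi.sub_apply, Pi.smul_apply, Matrix.cons_val_zero, Matrix.cons_val_one,
    Matrix.head_cons, Matrix.cons_val_two, Matrix.tail_cons, smul_eq_mul, mul_zero,
    mul_one, sub_zero, h2, zero_sub, norm_neg, hω]
  rw [h2, normSq_zero] at hx
  simp only [Complex.sq_norm]
  norm_num
  linarith

open Complex in
lemma enorm_e3_sub_smul (x : Fin 3 → ℂ) (hx : normSq (x 0) + normSq (x 1) + normSq (x 2) = 1)
    (h2 : x 2 = 0) (ω : ℂ) (hω : ‖ω‖ = 1) :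
    _root_.enorm ((![0,0,1] : Fin 3 → ℂ) - ω • x) = Real.sqrt 2 := by
  unfold _root_.enorm
  congr 1
  rw [Fin.sum_univ_three]
  simp only [Pi.sub_apply, Pi.smul_apply, Matrix.cons_val_zero, Matrix.cons_val_one,
    Matrix.head_cons, Matrix.cons_val_two, Matrix.tail_cons, smul_eq_mul,
    h2, mul_zero, sub_zero, zero_sub, norm_neg, norm_mul, hω, one_mul]
  rw [h2, normSq_zero] at hx
  simp only [Complex.sq_norm]
  norm_num
  linarith

open Complex in
lemma projDist_ge (x : Fin 3 → ℂ) (hx : normSq (x 0) + normSq (x 1) + normSq (x 2) = 1)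
    (h2 : x 2 = 0) : (1:ℝ) ≤ projDist ![0,0,1] x := by
  unfold projDist
  apply le_csInf
  · exact ⟨Real.sqrt 2, 1, by norm_num, (enorm_e3_sub_smul x hx h2 1 (by norm_num)).symm⟩
  · rintro d ⟨ω, hω, rfl⟩
    rw [enorm_e3_sub_smul x hx h2 ω hω]
    nlinarith [Real.sq_sqrt (by norm_num : (0:ℝ) ≤ 2), Real.sqrt_nonneg 2]

open Complex in
theorem concrete_3x3_not_strongly_continuous :
    let A : Matrix (Fin 3) (Fin 3) ℂ := !![0,2,0; 0,0,0; 0,0,1]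
    let e₃ : Fin 3 → ℂ := ![0,0,1]
    NR A = Metric.closedBall (0:ℂ) 1 ∧
    (1:ℂ) ∈ frontier (NR A) ∧
    fA A e₃ = 1 ∧
    (∀ x : Fin 3 → ℂ, star x ⬝ᵥ x = 1 → ∀ ζ ∈ frontier (NR A), ζ ≠ 1 →
      fA A x = ζ → x 2 = 0 ∧ ∀ ω : ℂ, ‖ω‖ = 1 → Real.sqrt 2 ≤ _root_.enorm (x - ω • e₃)) ∧
    ¬ (∀ ε > (0:ℝ), ∃ δ > (0:ℝ), ∀ z' ∈ NR A, ‖1 - z'‖ < δ →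
        ∃ x', star x' ⬝ᵥ x' = 1 ∧ fA A x' = z' ∧ projDist e₃ x' < ε) := by
  intro A e₃
  have hfr : frontier (NR A) = Metric.sphere (0:ℂ) 1 := by
    rw [NR_eq, frontier_closedBall (0:ℂ) one_ne_zero]
  have habs_of_fr : ∀ ζ : ℂ, ζ ∈ frontier (NR A) → ‖ζ‖ = 1 := by
    intro ζ hζ
    rw [hfr, mem_sphere_iff_norm, sub_zero] at hζ
    exact hζ
  -- the fourth bullet, proved once
  have hfour : ∀ x : Fin 3 → ℂ, star x ⬝ᵥ x = 1 → ∀ ζ ∈ frontier (NR A), ζ ≠ 1 →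
      fA A x = ζ → x 2 = 0 ∧ ∀ ω : ℂ, ‖ω‖ = 1 → Real.sqrt 2 ≤ _root_.enorm (x - ω • e₃) := by
    intro x hx ζ hζ hζ1 hf
    have hz2 : x 2 = 0 := bdry_third_zero x hx ζ (habs_of_fr ζ hζ) hζ1 hf
    have hx' : normSq (x 0) + normSq (x 1) + normSq (x 2) = 1 := by
      rw [dot_self_eq_s13] at hx; exact_mod_cast hx
    exact ⟨hz2, fun ω hω => (enorm_sub_smul x hx' hz2 ω hω).ge⟩
  refine ⟨NR_eq, ?_, ?_, hfour, ?_⟩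
  · rw [hfr]
    simp [mem_sphere_iff_norm]
  · rw [show fA A e₃ = _ from fA_eq_s13 e₃]
    simp [e₃]
  · intro h
    obtain ⟨δ, hδ0, h⟩ := h 1 one_pos
    set t : ℝ := min (δ/8) 1 with htdef
    have ht0 : 0 < t := lt_min (by linarith) one_pos
    have ht1 : t ≤ 1 := min_le_right _ _
    have htδ : t ≤ δ/8 := min_le_left _ _
    have hd : (0:ℝ) < 1 + t^2 := by positivity
    set z' : ℂ := (((1 - t^2)/(1 + t^2) : ℝ) : ℂ) + (((2*t/(1 + t^2)) : ℝ) : ℂ) * Complex.I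
      with hz'def
    have hnsq : normSq z' = 1 := by
      rw [hz'def, Complex.normSq_add_mul_I]
      field_simp
      ring
    have habs : ‖z'‖ = 1 := by
      rw [← Complex.sq_norm] at hnsq
      nlinarith [norm_nonneg z']
    have hz'NR : z' ∈ NR A := by
      rw [NR_eq]
      simp [habs]
    have hz'im : z'.im = 2*t/(1 + t^2) := by
      rw [hz'def]; simp [-Complex.ofReal_div]
    have hz'ne : z' ≠ 1 := by
      intro hE
      have h2t : 2*t/(1+t^2) > 0 := by positivity
      rw [hE] at hz'im
      simp at hz'im
      linarith
    have hclose : ‖1 - z'‖ < δ := by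
      have h1 : (1 - z') = (((2*t^2)/(1 + t^2) : ℝ) : ℂ) + ((-(2*t/(1 + t^2)) : ℝ) : ℂ) * Complex.I := by
        rw [hz'def]
        push_cast
        have hC : ((1:ℂ) + (t:ℂ)^2) ≠ 0 := by
          exact_mod_cast Complex.ofReal_ne_zero.mpr hd.ne'
        field_simp
        ring
      calc ‖1 - z'‖ ≤ |(1-z').re| + |(1-z').im| :=
            Complex.norm_le_abs_re_add_abs_im _
        _ < δ := by
            rw [h1]
            have hre : ((((2*t^2)/(1 + t^2):ℝ):ℂ) + ((-(2*t/(1 + t^2)):ℝ):ℂ)*Complex.I).re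
                = 2*t^2/(1 + t^2) := by simp [-Complex.ofReal_div]
            have him' : ((((2*t^2)/(1 + t^2):ℝ):ℂ) + ((-(2*t/(1 + t^2)):ℝ):ℂ)*Complex.I).im
                = -(2*t/(1 + t^2)) := by simp [-Complex.ofReal_div]
            rw [hre, him', _root_.abs_of_nonneg (by positivity), abs_neg,
              _root_.abs_of_nonneg (by positivity)]
            have he1 : 2*t^2/(1+t^2) ≤ 2*t := by
              rw [div_le_iff₀ hd]; nlinarith
            have he2 : 2*t/(1+t^2) ≤ 2*t := by
              rw [div_le_iff₀ hd]; nlinarith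
            linarith
    obtain ⟨x', hx1, hx2, hx3⟩ := h z' hz'NR hclose
    have hfr1 : z' ∈ frontier (NR A) := by rw [hfr]; simpa [mem_sphere_iff_norm] using habs
    have h2 : x' 2 = 0 := bdry_third_zero x' hx1 z' habs hz'ne hx2
    have hx' : normSq (x' 0) + normSq (x' 1) + normSq (x' 2) = 1 := by
      rw [dot_self_eq_s13] at hx1; exact_mod_cast hx1
    have := projDist_ge x' hx' h2
    simp only [e₃] at hx3
    linarith
end

section
/- Let A ∈ M₄(ℂ) be given by A = H + iK with H = diag(0,0,1,1) and K the real symmetric matrix with K₁₃ = K₃₁ = k₁, K₂₄ = K₄₂ = k₂, K₃₄ = K₄₃ = r, all other entries zero, where k₁ > k₂ > 0 and r > 0. Then A is unitarily irreducible, i.e., H and K have no common nontrivial invariant subspace. -/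
open Matrix

private lemma aux_Kmul (k₁ k₂ r : ℝ) (v : Fin 4 → ℂ) :
    (!![0,0,(k₁:ℂ),0; 0,0,0,(k₂:ℂ); (k₁:ℂ),0,0,(r:ℂ); 0,(k₂:ℂ),(r:ℂ),0]).mulVec v
      = ![k₁ * v 2, k₂ * v 3, k₁ * v 0 + r * v 3, k₂ * v 1 + r * v 2] := by
  funext i; fin_cases i <;> simp [Matrix.mulVec, dotProduct, Fin.sum_univ_four]

private lemma aux_Hmul (v : Fin 4 → ℂ) :
    (Matrix.diagonal ![0,0,1,1] : Matrix (Fin 4) (Fin 4) ℂ).mulVec v = ![0,0,v 2,v 3] := by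
  funext i; fin_cases i <;> simp [Matrix.mulVec_diagonal]

private lemma aux_main (k₁ k₂ r : ℝ) (hk : k₂ < k₁) (hk₂ : 0 < k₂) (hr : 0 < r)
    (V : Submodule ℂ (Fin 4 → ℂ))
    (hH : ∀ v ∈ V, (Matrix.diagonal ![0,0,1,1] : Matrix (Fin 4) (Fin 4) ℂ).mulVec v ∈ V)
    (hK : ∀ v ∈ V,
      (!![0,0,(k₁:ℂ),0; 0,0,0,(k₂:ℂ); (k₁:ℂ),0,0,(r:ℂ); 0,(k₂:ℂ),(r:ℂ),0]).mulVec v ∈ V)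
    (w : Fin 4 → ℂ) (hw : w ∈ V) (hw0 : w 0 = 0) (hw1 : w 1 = 0)
    (hwn : w 2 ≠ 0 ∨ w 3 ≠ 0) : V = ⊤ := by
  have hk₁ : (0:ℝ) < k₁ := lt_trans hk₂ hk
  have hk₁' : (k₁:ℂ) ≠ 0 := by exact_mod_cast ne_of_gt hk₁
  have hk₂' : (k₂:ℂ) ≠ 0 := by exact_mod_cast ne_of_gt hk₂
  have hr' : (r:ℂ) ≠ 0 := by exact_mod_cast ne_of_gt hr
  have hdiff : ((k₁:ℂ)^2 - (k₂:ℂ)^2) ≠ 0 := by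
    have : (k₂:ℝ)^2 < k₁^2 := by nlinarith
    have h2 : ((k₂:ℝ)^2 : ℝ) ≠ (k₁:ℝ)^2 := ne_of_lt this
    intro hc
    apply h2
    have : ((k₁:ℂ)^2) = ((k₂:ℂ)^2) := by linear_combination hc
    exact_mod_cast this.symm
  -- helper to promote bottom basis vectors
  have key2 : ∀ a : ℂ, a ≠ 0 → (![0,0,a,0] : Fin 4 → ℂ) ∈ V → (![0,0,1,0] : Fin 4 → ℂ) ∈ V := by
    intro a ha hmem
    have : (![0,0,1,0] : Fin 4 → ℂ) = a⁻¹ • ![0,0,a,0] := by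
      funext i; fin_cases i <;> simp [inv_mul_cancel₀ ha]
    rw [this]; exact V.smul_mem _ hmem
  have key3 : ∀ a : ℂ, a ≠ 0 → (![0,0,0,a] : Fin 4 → ℂ) ∈ V → (![0,0,0,1] : Fin 4 → ℂ) ∈ V := by
    intro a ha hmem
    have : (![0,0,0,1] : Fin 4 → ℂ) = a⁻¹ • ![0,0,0,a] := by
      funext i; fin_cases i <;> simp [inv_mul_cancel₀ ha]
    rw [this]; exact V.smul_mem _ hmem
  -- Kw ∈ V
  have hKw := hK w hw
  rw [aux_Kmul] at hKw
  -- b2 = H (K w) = ![0,0, r w3, r w2]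
  have hb2 := hH _ hKw
  rw [aux_Hmul] at hb2
  have hb2' : (![0,0,(r:ℂ) * w 3, (r:ℂ) * w 2] : Fin 4 → ℂ) ∈ V := by
    have e : (![0,0,(r:ℂ) * w 3, (r:ℂ) * w 2] : Fin 4 → ℂ)
        = ![0,0,(![(k₁:ℂ) * w 2, (k₂:ℂ) * w 3, (k₁:ℂ) * w 0 + r * w 3,
            (k₂:ℂ) * w 1 + r * w 2] : Fin 4 → ℂ) 2,
          (![(k₁:ℂ) * w 2, (k₂:ℂ) * w 3, (k₁:ℂ) * w 0 + r * w 3,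
            (k₂:ℂ) * w 1 + r * w 2] : Fin 4 → ℂ) 3] := by
      funext i; fin_cases i <;> simp [hw0, hw1]
    rw [e]; exact hb2
  -- t = Kw - H(Kw) = ![k₁ w2, k₂ w3, 0, 0] ∈ V
  have ht : (![(k₁:ℂ) * w 2, (k₂:ℂ) * w 3, 0, 0] : Fin 4 → ℂ) ∈ V := by
    have hsub := V.sub_mem hKw hb2
    have e : (![(k₁:ℂ) * w 2, (k₂:ℂ) * w 3, 0, 0] : Fin 4 → ℂ)
        = (![(k₁:ℂ) * w 2, (k₂:ℂ) * w 3, (k₁:ℂ) * w 0 + r * w 3,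
            (k₂:ℂ) * w 1 + r * w 2] : Fin 4 → ℂ)
          - ![0,0,(![(k₁:ℂ) * w 2, (k₂:ℂ) * w 3, (k₁:ℂ) * w 0 + r * w 3,
            (k₂:ℂ) * w 1 + r * w 2] : Fin 4 → ℂ) 2,
          (![(k₁:ℂ) * w 2, (k₂:ℂ) * w 3, (k₁:ℂ) * w 0 + r * w 3,
            (k₂:ℂ) * w 1 + r * w 2] : Fin 4 → ℂ) 3] := by
      funext i; fin_cases i <;> simp
    rw [e]; exact hsub
  -- b3 = K t = ![0,0, k₁² w2, k₂² w3] ∈ V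
  have hb3 : (![0,0,(k₁:ℂ)^2 * w 2, (k₂:ℂ)^2 * w 3] : Fin 4 → ℂ) ∈ V := by
    have := hK _ ht
    rw [aux_Kmul] at this
    have e : (![0,0,(k₁:ℂ)^2 * w 2, (k₂:ℂ)^2 * w 3] : Fin 4 → ℂ)
        = ![(k₁:ℂ) * (![(k₁:ℂ) * w 2, (k₂:ℂ) * w 3, 0, 0] : Fin 4 → ℂ) 2,
            (k₂:ℂ) * (![(k₁:ℂ) * w 2, (k₂:ℂ) * w 3, 0, 0] : Fin 4 → ℂ) 3,
            (k₁:ℂ) * (![(k₁:ℂ) * w 2, (k₂:ℂ) * w 3, 0, 0] : Fin 4 → ℂ) 0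
              + r * (![(k₁:ℂ) * w 2, (k₂:ℂ) * w 3, 0, 0] : Fin 4 → ℂ) 3,
            (k₂:ℂ) * (![(k₁:ℂ) * w 2, (k₂:ℂ) * w 3, 0, 0] : Fin 4 → ℂ) 1
              + r * (![(k₁:ℂ) * w 2, (k₂:ℂ) * w 3, 0, 0] : Fin 4 → ℂ) 2] := by
      funext i; fin_cases i <;> simp <;> ring
    rw [e]; exact this
  -- get e2 and e3 in V
  have he23 : (![0,0,1,0] : Fin 4 → ℂ) ∈ V ∧ (![0,0,0,1] : Fin 4 → ℂ) ∈ V := by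
    by_cases h2 : w 2 = 0
    · have h3 : w 3 ≠ 0 := hwn.resolve_left (not_not.mpr h2)
      constructor
      · apply key2 ((r:ℂ) * w 3) (mul_ne_zero hr' h3)
        have e : (![0,0,(r:ℂ) * w 3, 0] : Fin 4 → ℂ) = ![0,0,(r:ℂ) * w 3, (r:ℂ) * w 2] := by
          funext i; fin_cases i <;> simp [h2]
        rw [e]; exact hb2'
      · apply key3 (w 3) h3
        have e : (![0,0,0,w 3] : Fin 4 → ℂ) = w := by
          funext i; fin_cases i <;> simp [hw0, hw1, h2]
        rw [e]; exact hw
    · by_cases h3 : w 3 = 0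
      · constructor
        · apply key2 (w 2) h2
          have e : (![0,0,w 2,0] : Fin 4 → ℂ) = w := by
            funext i; fin_cases i <;> simp [hw0, hw1, h3]
          rw [e]; exact hw
        · apply key3 ((r:ℂ) * w 2) (mul_ne_zero hr' h2)
          have e : (![0,0,0,(r:ℂ) * w 2] : Fin 4 → ℂ) = ![0,0,(r:ℂ) * w 3, (r:ℂ) * w 2] := by
            funext i; fin_cases i <;> simp [h3]
          rw [e]; exact hb2'
      · -- both nonzero: use b3 - k₂² w and b3 - k₁² w
        constructor
        · apply key2 (((k₁:ℂ)^2 - (k₂:ℂ)^2) * w 2) (mul_ne_zero hdiff h2)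
          have e : (![0,0,((k₁:ℂ)^2 - (k₂:ℂ)^2) * w 2, 0] : Fin 4 → ℂ)
              = ![0,0,(k₁:ℂ)^2 * w 2, (k₂:ℂ)^2 * w 3] - ((k₂:ℂ)^2) • w := by
            funext i; fin_cases i <;> simp [hw0, hw1] <;> ring
          rw [e]; exact V.sub_mem hb3 (V.smul_mem _ hw)
        · apply key3 (((k₂:ℂ)^2 - (k₁:ℂ)^2) * w 3)
            (mul_ne_zero (fun hc => hdiff (by linear_combination -hc)) h3)
          have e : (![0,0,0,((k₂:ℂ)^2 - (k₁:ℂ)^2) * w 3] : Fin 4 → ℂ)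
              = ![0,0,(k₁:ℂ)^2 * w 2, (k₂:ℂ)^2 * w 3] - ((k₁:ℂ)^2) • w := by
            funext i; fin_cases i <;> simp [hw0, hw1] <;> ring
          rw [e]; exact V.sub_mem hb3 (V.smul_mem _ hw)
  obtain ⟨he2, he3⟩ := he23
  -- e0 ∈ V : K e2 - r e3 = ![k₁,0,0,0]
  have he0 : (![1,0,0,0] : Fin 4 → ℂ) ∈ V := by
    have hKe2 := hK _ he2
    rw [aux_Kmul] at hKe2
    have e : (![1,0,0,0] : Fin 4 → ℂ)
        = (k₁:ℂ)⁻¹ • ((![(k₁:ℂ) * (![0,0,1,0] : Fin 4 → ℂ) 2,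
            (k₂:ℂ) * (![0,0,1,0] : Fin 4 → ℂ) 3,
            (k₁:ℂ) * (![0,0,1,0] : Fin 4 → ℂ) 0 + r * (![0,0,1,0] : Fin 4 → ℂ) 3,
            (k₂:ℂ) * (![0,0,1,0] : Fin 4 → ℂ) 1 + r * (![0,0,1,0] : Fin 4 → ℂ) 2] : Fin 4 → ℂ)
          - (r:ℂ) • ![0,0,0,1]) := by
      funext i; fin_cases i <;> simp [inv_mul_cancel₀ hk₁']
    rw [e]; exact V.smul_mem _ (V.sub_mem hKe2 (V.smul_mem _ he3))
  have he1 : (![0,1,0,0] : Fin 4 → ℂ) ∈ V := by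
    have hKe3 := hK _ he3
    rw [aux_Kmul] at hKe3
    have e : (![0,1,0,0] : Fin 4 → ℂ)
        = (k₂:ℂ)⁻¹ • ((![(k₁:ℂ) * (![0,0,0,1] : Fin 4 → ℂ) 2,
            (k₂:ℂ) * (![0,0,0,1] : Fin 4 → ℂ) 3,
            (k₁:ℂ) * (![0,0,0,1] : Fin 4 → ℂ) 0 + r * (![0,0,0,1] : Fin 4 → ℂ) 3,
            (k₂:ℂ) * (![0,0,0,1] : Fin 4 → ℂ) 1 + r * (![0,0,0,1] : Fin 4 → ℂ) 2] : Fin 4 → ℂ)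
          - (r:ℂ) • ![0,0,1,0]) := by
      funext i; fin_cases i <;> simp [inv_mul_cancel₀ hk₂']
    rw [e]; exact V.smul_mem _ (V.sub_mem hKe3 (V.smul_mem _ he2))
  -- conclude V = ⊤
  rw [Submodule.eq_top_iff']
  intro x
  have e : x = x 0 • (![1,0,0,0] : Fin 4 → ℂ) + x 1 • ![0,1,0,0]
      + x 2 • ![0,0,1,0] + x 3 • ![0,0,0,1] := by
    funext i; fin_cases i <;> simp
  rw [e]
  exact V.add_mem (V.add_mem (V.add_mem (V.smul_mem _ he0) (V.smul_mem _ he1))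
    (V.smul_mem _ he2)) (V.smul_mem _ he3)

theorem concrete_4x4_unitarily_irreducible
    (k₁ k₂ r : ℝ) (hk : k₂ < k₁) (hk₂ : 0 < k₂) (hr : 0 < r) :
    let H : Matrix (Fin 4) (Fin 4) ℂ := Matrix.diagonal ![0,0,1,1]
    let K : Matrix (Fin 4) (Fin 4) ℂ :=
      !![0,0,(k₁:ℂ),0; 0,0,0,(k₂:ℂ); (k₁:ℂ),0,0,(r:ℂ); 0,(k₂:ℂ),(r:ℂ),0]
    ¬ ∃ V : Submodule ℂ (Fin 4 → ℂ), V ≠ ⊥ ∧ V ≠ ⊤ ∧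
      (∀ v ∈ V, H.mulVec v ∈ V) ∧ (∀ v ∈ V, K.mulVec v ∈ V) := by
  intro H K
  rintro ⟨V, hbot, htop, hH, hK⟩
  have hHdef : H = Matrix.diagonal ![0,0,1,1] := rfl
  have hKdef : K = !![0,0,(k₁:ℂ),0; 0,0,0,(k₂:ℂ); (k₁:ℂ),0,0,(r:ℂ); 0,(k₂:ℂ),(r:ℂ),0] := rfl
  rw [hHdef] at hH
  rw [hKdef] at hK
  apply htop
  obtain ⟨v, hvV, hv0⟩ := Submodule.exists_mem_ne_zero_of_ne_bot hbot
  by_cases hc : v 2 = 0 ∧ v 3 = 0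
  · -- v = (v0, v1, 0, 0); use Kv
    obtain ⟨h2, h3⟩ := hc
    have hne : v 0 ≠ 0 ∨ v 1 ≠ 0 := by
      by_contra hcc
      push_neg at hcc
      apply hv0
      funext i; fin_cases i <;> simp [hcc.1, hcc.2, h2, h3]
    have hKv := hK v hvV
    rw [aux_Kmul] at hKv
    apply aux_main k₁ k₂ r hk hk₂ hr V hH hK _ hKv
    · simp [h2]
    · simp [h3]
    · have hk₁' : (k₁:ℂ) ≠ 0 := by
        exact_mod_cast ne_of_gt (lt_trans hk₂ hk)
      have hk₂' : (k₂:ℂ) ≠ 0 := by exact_mod_cast ne_of_gt hk₂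
      rcases hne with h | h
      · left; simpa [h3] using mul_ne_zero hk₁' h
      · right; simpa [h2] using mul_ne_zero hk₂' h
  · -- bottom part nonzero: use H v
    have hHv := hH v hvV
    rw [aux_Hmul] at hHv
    apply aux_main k₁ k₂ r hk hk₂ hr V hH hK _ hHv
    · simp
    · simp
    · push_neg at hc
      by_cases h2 : v 2 = 0
      · right; simpa using hc h2
      · left; simpa using h2
end
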